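/- arXiv:1602.05937 — 5 statements merged into one kernel-verified Lean document; each statement's English description precedes it below -/
import Mathlib

section
/- For every connected graph F there exists a constant C = C(F) > 0 such that for every admissible pair (G,d) with d > 1 and v(G) ≥ 1, one has |t(F,G,d) − t_inj(F,G,d)| ≤ C/d. -/
open Filter Topology

noncomputable def homCount {α β : Type*} (F : SimpleGraph α) (G : SimpleGraph β) : ℕ :=
  Nat.card (F →g G)

noncomputable def injCount {α β : Type*} (F : SimpleGraph α) (G : SimpleGraph β) : ℕ :=
  Nat.card {f : F →g G // Function.Injective f}

noncomputable def vdegree {α : Type*} (G : SimpleGraph α) (x : α) : ℕ :=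
  Nat.card (G.neighborSet x)

noncomputable def edgeCount {α : Type*} (G : SimpleGraph α) : ℕ := Nat.card G.edgeSet

noncomputable def numComponents {α : Type*} (F : SimpleGraph α) : ℕ :=
  Nat.card F.ConnectedComponent

noncomputable def numBigComponents {α : Type*} (F : SimpleGraph α) : ℕ :=
  Nat.card {c : F.ConnectedComponent // 2 ≤ Nat.card c.supp}

def Admissible {α : Type*} (G : SimpleGraph α) (d : ℝ) : Prop :=
  1 ≤ d ∧ ∀ x : α, (vdegree G x : ℝ) ≤ d

noncomputable def homDensity {α β : Type*} (F : SimpleGraph α) (G : SimpleGraph β) (d : ℝ) : ℝ :=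
  (homCount F G : ℝ) /
    ((Nat.card β : ℝ) ^ numComponents F * d ^ (Nat.card α - numComponents F))

noncomputable def injDensity {α β : Type*} (F : SimpleGraph α) (G : SimpleGraph β) (d : ℝ) : ℝ :=
  (injCount F G : ℝ) /
    ((Nat.card β : ℝ) ^ numComponents F * d ^ numBigComponents F *
      (d - 1) ^ (Nat.card α - numComponents F - numBigComponents F))

open Finset in

lemma count_branch {V : Type*} [DecidableEq V] :
    ∀ (n : ℕ) (A : Fin n → (Fin n → V) → Finset V) (c : Fin n → ℝ),
      (∀ (j : Fin n) (g g' : Fin n → V), (∀ i < j, g i = g' i) → A j g = A j g') →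
      (∀ j, 0 ≤ c j) →
      (∀ (g : Fin n → V) (j : Fin n), (∀ i < j, g i ∈ A i g) → ((A j g).card : ℝ) ≤ c j) →
      ∀ s : Finset (Fin n → V), (∀ g ∈ s, ∀ j, g j ∈ A j g) →
        (s.card : ℝ) ≤ ∏ j, c j
  | 0, A, c, hdep, hc, hA, s, hs => by
      have h1 : s.card ≤ 1 := Finset.card_le_one.mpr (fun a _ b _ => Subsingleton.elim a b)
      calc (s.card : ℝ) ≤ 1 := by exact_mod_cast h1
        _ = ∏ j : Fin 0, c j := by simp
  | (n+1), A, c, hdep, hc, hA, s, hs => by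
      classical
      rcases s.eq_empty_or_nonempty with rfl | ⟨gstar, hgstar⟩
      · simpa using Finset.prod_nonneg (fun j _ => hc j)
      set v₀ : V := gstar (Fin.last n) with hv₀
      have snoc_lt : ∀ (g₀ : Fin n → V) (v : V) (i : Fin (n+1)) (h : (i:ℕ) < n),
          (Fin.snoc g₀ v : Fin (n+1) → V) i = g₀ ⟨i, h⟩ := by
        intro g₀ v i h
        simp [Fin.snoc, h]; rfl
      have cast_lt : ∀ (i : Fin (n+1)) (h : (i:ℕ) < n),
          Fin.castSucc (⟨i, h⟩ : Fin n) = i := by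
        intro i h; apply Fin.ext; simp
      set A' : Fin n → (Fin n → V) → Finset V :=
        fun j g₀ => A j.castSucc (Fin.snoc g₀ v₀) with hA'def
      set c' : Fin n → ℝ := fun j => c j.castSucc with hc'def
      have hltn : ∀ {i : Fin (n+1)} {j : Fin n}, i < j.castSucc → (i:ℕ) < n := by
        intro i j hij
        have h1 : (i:ℕ) < ((j.castSucc : Fin (n+1)) : ℕ) := hij
        have h2 := j.isLt
        simp only [Fin.coe_castSucc] at h1
        omega
      have hdep' : ∀ (j : Fin n) (g g' : Fin n → V), (∀ i < j, g i = g' i) →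
          A' j g = A' j g' := by
        intro j g g' hagree
        apply hdep
        intro i hij
        have hin : (i : ℕ) < n := hltn hij
        rw [snoc_lt _ _ _ hin, snoc_lt _ _ _ hin]
        apply hagree
        have := Fin.lt_def.mp hij
        simp only [Fin.coe_castSucc] at this
        exact Fin.lt_def.mpr (by simpa using this)
      have hA'' : ∀ (g : Fin n → V) (j : Fin n), (∀ i < j, g i ∈ A' i g) →
          ((A' j g).card : ℝ) ≤ c' j := by
        intro g j hcond
        apply hA (Fin.snoc g v₀) j.castSucc
        intro i hij
        have hin : (i : ℕ) < n := hltn hij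
        rw [snoc_lt _ _ _ hin]
        have hlt : (⟨i, hin⟩ : Fin n) < j := by
          have := Fin.lt_def.mp hij
          simp only [Fin.coe_castSucc] at this
          exact Fin.lt_def.mpr (by simpa using this)
        have h2 := hcond ⟨i, hin⟩ hlt
        rw [hA'def] at h2
        simpa [cast_lt i hin] using h2
      set s' : Finset (Fin n → V) := s.image (fun g => Fin.init g) with hs'def
      have init_eq : ∀ (g : Fin (n+1) → V) (i : Fin (n+1)) (h : (i:ℕ) < n),
          Fin.init g ⟨i, h⟩ = g i := by
        intro g i h
        show g (Fin.castSucc ⟨i, h⟩) = g i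
        rw [cast_lt i h]
      have hagree_init : ∀ (g : Fin (n+1) → V) (i : Fin (n+1)) (h : (i:ℕ) < n),
          (Fin.snoc (Fin.init g) v₀ : Fin (n+1) → V) i = g i := by
        intro g i h
        rw [snoc_lt _ _ _ h, init_eq g i h]
      have hs' : ∀ g₀ ∈ s', ∀ j, g₀ j ∈ A' j g₀ := by
        intro g₀ hg₀ j
        rcases Finset.mem_image.mp hg₀ with ⟨g, hg, rfl⟩
        have heq : A' j (Fin.init g) = A j.castSucc g := by
          apply hdep
          intro i hij
          exact hagree_init g i (hltn hij)
        rw [hA'def] at heq ⊢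
        rw [heq]
        have : Fin.init g j = g j.castSucc := rfl
        rw [this]
        exact hs g hg j.castSucc
      have IH := count_branch n A' c' hdep' (fun j => hc j.castSucc) hA'' s' hs'
      have hcardsum : s.card = ∑ b ∈ s', (s.filter (fun g => Fin.init g = b)).card :=
        Finset.card_eq_sum_card_image (fun g => Fin.init g) s
      have hfiber : ∀ b ∈ s', ((s.filter (fun g => Fin.init g = b)).card : ℝ) ≤ c (Fin.last n) := by
        intro b hb
        rcases Finset.mem_image.mp hb with ⟨gb, hgb, hgbb⟩
        have h1 : (s.filter (fun g => Fin.init g = b)).card ≤ (A (Fin.last n) gb).card := by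
          apply Finset.card_le_card_of_injOn (fun g => g (Fin.last n))
          · intro g hg
            rcases Finset.mem_filter.mp (Finset.mem_coe.mp hg) with ⟨hgs, hgi⟩
            have heq : A (Fin.last n) g = A (Fin.last n) gb := by
              apply hdep
              intro i hij
              have hin : (i:ℕ) < n := by
                have := Fin.lt_def.mp hij
                simpa using this
              rw [← init_eq g i hin, ← init_eq gb i hin, hgi, hgbb]
            rw [← heq]
            exact hs g hgs (Fin.last n)
          · intro g hg g' hg' hlast
            rcases Finset.mem_filter.mp (Finset.mem_coe.mp hg) with ⟨_, hgi⟩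
            rcases Finset.mem_filter.mp (Finset.mem_coe.mp hg') with ⟨_, hgi'⟩
            have hlast' : g (Fin.last n) = g' (Fin.last n) := hlast
            have : (Fin.snoc (Fin.init g) (g (Fin.last n)) : Fin (n+1) → V)
                = Fin.snoc (Fin.init g') (g' (Fin.last n)) := by
              rw [hgi, hgi', hlast']
            rwa [Fin.snoc_init_self, Fin.snoc_init_self] at this
        have h2 : ((A (Fin.last n) gb).card : ℝ) ≤ c (Fin.last n) :=
          hA gb (Fin.last n) (fun i _ => hs gb hgb i)
        exact le_trans (by exact_mod_cast h1) h2
      calc (s.card : ℝ) = ∑ b ∈ s', ((s.filter (fun g => Fin.init g = b)).card : ℝ) := by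
            rw [hcardsum]; push_cast; ring
        _ ≤ ∑ _b ∈ s', c (Fin.last n) := Finset.sum_le_sum hfiber
        _ = s'.card * c (Fin.last n) := by rw [Finset.sum_const, nsmul_eq_mul]
        _ ≤ (∏ j : Fin n, c' j) * c (Fin.last n) :=
            mul_le_mul_of_nonneg_right IH (hc _)
        _ = ∏ j : Fin (n+1), c j := by rw [Fin.prod_univ_castSucc]

open Finset in

lemma exists_order {α : Type*} [Fintype α] (F : SimpleGraph α) (hF : F.Connected) :
    ∃ e : Fin (Fintype.card α) ≃ α, ∀ i : Fin (Fintype.card α), 0 < (i:ℕ) →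
      ∃ j, j < i ∧ F.Adj (e j) (e i) := by
  classical
  have key : ∀ k, k ≤ Fintype.card α → ∃ f : Fin k ↪ α,
      ∀ i : Fin k, 0 < (i:ℕ) → ∃ j, j < i ∧ F.Adj (f j) (f i) := by
    intro k
    induction k with
    | zero =>
      intro _
      exact ⟨⟨fun i => i.elim0, fun i => i.elim0⟩, fun i => i.elim0⟩
    | succ k ih =>
      intro hk1
      obtain ⟨f, hf⟩ := ih (le_of_lt hk1)
      have hex : ∃ x : α, x ∉ Set.range f := by
        by_contra hcon
        push_neg at hcon
        have hsurj : Function.Surjective f := fun x => hcon x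
        have := Fintype.card_le_of_surjective f hsurj
        simp at this
        omega
      match k, f, hf, hk1 with
      | 0, f, hf, hk1 =>
        obtain ⟨x⟩ := hF.nonempty
        refine ⟨⟨fun _ => x, fun a b _ => by apply Fin.ext; have := a.isLt; have := b.isLt; omega⟩,
          fun i hi => absurd hi (by have := i.isLt; omega)⟩
      | (k'+1), f, hf, hk1 =>
        obtain ⟨x, hx⟩ := hex
        have hreach : F.Reachable (f 0) x := hF.preconnected (f 0) x
        obtain ⟨p⟩ := hreach
        obtain ⟨d, _, hd1, hd2⟩ := p.exists_boundary_dart (Set.range f)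
          (Set.mem_range_self 0) hx
        obtain ⟨j₀, hj₀⟩ := hd1
        set y := d.snd with hy
        refine ⟨⟨fun i => if h : (i:ℕ) < k'+1 then f ⟨i, h⟩ else y, ?_⟩, ?_⟩
        · intro a b hab
          simp only at hab
          by_cases ha : (a:ℕ) < k'+1 <;> by_cases hb : (b:ℕ) < k'+1
          · rw [dif_pos ha, dif_pos hb] at hab
            have := f.injective hab
            apply Fin.ext
            simpa [Fin.ext_iff] using this
          · rw [dif_pos ha, dif_neg hb] at hab
            exact absurd (hab ▸ Set.mem_range_self _) hd2
          · rw [dif_neg ha, dif_pos hb] at hab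
            exact absurd (hab ▸ Set.mem_range_self _) hd2
          · apply Fin.ext
            have := a.isLt; have := b.isLt; omega
        · intro i hi
          show ∃ j, j < i ∧ F.Adj (if h : (j:ℕ) < k'+1 then f ⟨j, h⟩ else y) (if h : (i:ℕ) < k'+1 then f ⟨i, h⟩ else y)
          by_cases h : (i:ℕ) < k'+1
          · obtain ⟨j, hji, hadj⟩ := hf ⟨i, h⟩ (by simpa using hi)
            refine ⟨⟨j, by omega⟩, by simp [Fin.lt_def]; exact hji, ?_⟩
            rw [dif_pos h]
            have hjlt : ((⟨(j:ℕ), by omega⟩ : Fin (k'+2)) : ℕ) < k'+1 := by simpa using j.isLt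
            rw [dif_pos hjlt]
            convert hadj using 2
          · refine ⟨⟨j₀, by omega⟩, by simp [Fin.lt_def]; omega, ?_⟩
            rw [dif_neg h]
            have hjlt : ((⟨(j₀:ℕ), by omega⟩ : Fin (k'+2)) : ℕ) < k'+1 := by simpa using j₀.isLt
            rw [dif_pos hjlt]
            have : f ⟨(j₀:ℕ), by simpa using j₀.isLt⟩ = d.fst := by
              rw [← hj₀]
            rw [this]
            exact d.adj
  obtain ⟨f, hf⟩ := key (Fintype.card α) le_rfl
  have hbij : Function.Bijective f := by
    rw [Fintype.bijective_iff_injective_and_card]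
    exact ⟨f.injective, by simp⟩
  exact ⟨Equiv.ofBijective f hbij, hf⟩

def hom_type_equiv {α : Type*} [Fintype α] {m : ℕ} (F : SimpleGraph α) (G : SimpleGraph (Fin m))
    (e : Fin (Fintype.card α) ≃ α) :
    (F →g G) ≃ {g : Fin (Fintype.card α) → Fin m //
      ∀ a b, F.Adj (e a) (e b) → G.Adj (g a) (g b)} where
  toFun f := ⟨fun i => f (e i), fun _ _ hab => f.map_rel hab⟩
  invFun g := ⟨fun a => g.1 (e.symm a), fun {a b} hab => g.2 _ _ (by simpa using hab)⟩
  left_inv f := by ext a; simp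
  right_inv g := by apply Subtype.ext; funext i; show g.1 (e.symm (e i)) = g.1 i; rw [Equiv.symm_apply_apply]

def inj_type_equiv {α : Type*} [Fintype α] {m : ℕ} (F : SimpleGraph α) (G : SimpleGraph (Fin m))
    (e : Fin (Fintype.card α) ≃ α) :
    {f : F →g G // Function.Injective f} ≃ {g : Fin (Fintype.card α) → Fin m //
      (∀ a b, F.Adj (e a) (e b) → G.Adj (g a) (g b)) ∧ Function.Injective g} where
  toFun f := ⟨fun i => f.1 (e i), ⟨fun _ _ hab => f.1.map_rel hab, f.2.comp e.injective⟩⟩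
  invFun g := ⟨⟨fun a => g.1 (e.symm a), fun {a b} hab => g.2.1 _ _ (by simpa using hab)⟩,
    g.2.2.comp e.symm.injective⟩
  left_inv f := by apply Subtype.ext; ext a; simp
  right_inv g := by apply Subtype.ext; funext i; show g.1 (e.symm (e i)) = g.1 i; rw [Equiv.symm_apply_apply]

lemma numComponents_eq_one {α : Type*} (F : SimpleGraph α) (hF : F.Connected) :
    numComponents F = 1 := by
  rw [numComponents, Nat.card_eq_one_iff_unique]
  constructor
  · constructor
    intro c c'
    refine SimpleGraph.ConnectedComponent.ind₂ ?_ c c'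
    intro v w
    exact SimpleGraph.ConnectedComponent.sound (hF.preconnected v w)
  · exact hF.nonempty.map F.connectedComponentMk

lemma numBigComponents_eq_one {α : Type*} [Fintype α] (F : SimpleGraph α) (hF : F.Connected)
    (h2 : 2 ≤ Fintype.card α) : numBigComponents F = 1 := by
  rw [numBigComponents, Nat.card_eq_one_iff_unique]
  have hsub : Subsingleton F.ConnectedComponent := by
    constructor
    intro c c'
    refine SimpleGraph.ConnectedComponent.ind₂ ?_ c c'
    intro v w
    exact SimpleGraph.ConnectedComponent.sound (hF.preconnected v w)
  constructor
  · exact ⟨fun a b => Subtype.ext (@Subsingleton.elim _ hsub _ _)⟩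
  · obtain ⟨v⟩ := hF.nonempty
    refine ⟨⟨F.connectedComponentMk v, ?_⟩⟩
    have hsupp : (F.connectedComponentMk v).supp = Set.univ := by
      apply Set.eq_univ_iff_forall.mpr
      intro w
      exact SimpleGraph.ConnectedComponent.sound (hF.preconnected w v)
    rw [hsupp]
    have : Nat.card (Set.univ : Set α) = Nat.card α := Nat.card_univ
    rw [this, Nat.card_eq_fintype_card]
    exact h2

lemma numBigComponents_eq_zero {α : Type*} [Fintype α] (F : SimpleGraph α)
    (h1 : Fintype.card α = 1) : numBigComponents F = 0 := by
  rw [numBigComponents]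
  have : IsEmpty {c : F.ConnectedComponent // 2 ≤ Nat.card c.supp} := by
    constructor
    rintro ⟨c, hc⟩
    have hle : Nat.card c.supp ≤ Nat.card α :=
      Nat.card_le_card_of_injective (fun x : c.supp => (x : α)) Subtype.val_injective
    rw [Nat.card_eq_fintype_card (α := α), h1] at hle
    omega
  exact Nat.card_of_isEmpty

open Finset
lemma prod_one_special {n : ℕ} (c : Fin n → ℝ) (z : Fin n) (dv : ℝ)
    (hother : ∀ j, j ≠ z → c j = dv) :
    ∏ j, c j = c z * dv ^ (n - 1) := by
  rw [← Finset.mul_prod_erase univ c (mem_univ z)]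
  congr 1
  rw [Finset.prod_congr rfl (fun j hj => hother j (Finset.mem_erase.mp hj).1),
    Finset.prod_const, Finset.card_erase_of_mem (mem_univ z), Finset.card_univ,
    Fintype.card_fin]

lemma prod_two_special {n : ℕ} (c : Fin n → ℝ) (z w : Fin n) (hzw : z ≠ w) (dv : ℝ)
    (hother : ∀ j, j ≠ z → j ≠ w → c j = dv) :
    ∏ j, c j = c z * c w * dv ^ (n - 2) := by
  rw [← Finset.mul_prod_erase univ c (mem_univ z),
    ← Finset.mul_prod_erase (univ.erase z) c
      (Finset.mem_erase.mpr ⟨Ne.symm hzw, mem_univ w⟩), ← mul_assoc]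
  congr 1
  rw [Finset.prod_congr rfl (fun j hj => by
      obtain ⟨hjw, hjz'⟩ := Finset.mem_erase.mp hj
      exact hother j (Finset.mem_erase.mp hjz').1 hjw),
    Finset.prod_const, Finset.card_erase_of_mem
      (Finset.mem_erase.mpr ⟨Ne.symm hzw, mem_univ w⟩),
    Finset.card_erase_of_mem (mem_univ z), Finset.card_univ, Fintype.card_fin]
  congr 1
  all_goals omega

section bounds

variable {m n : ℕ} {G : SimpleGraph (Fin m)} [DecidableRel G.Adj] {d : ℝ}
  {p : Fin n → Fin n} {H : Finset (Fin n → Fin m)}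

lemma boundB (hn : 1 ≤ n) (hd : 1 ≤ d)
    (hdeg : ∀ x : Fin m, ((G.neighborFinset x).card : ℝ) ≤ d)
    (hp : ∀ i : Fin n, 0 < (i : ℕ) → p i < i)
    (hH : ∀ g ∈ H, ∀ i : Fin n, 0 < (i : ℕ) → g i ∈ G.neighborFinset (g (p i))) :
    (H.card : ℝ) ≤ (m : ℝ) * d ^ (n - 1) := by
  classical
  set z : Fin n := ⟨0, by omega⟩ with hz
  set A : Fin n → (Fin n → Fin m) → Finset (Fin m) :=
    fun j g => if 0 < (j : ℕ) then G.neighborFinset (g (p j)) else univ with hA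
  set c : Fin n → ℝ := fun j => if 0 < (j : ℕ) then d else (m : ℝ) with hc
  have key := count_branch n A c ?_ ?_ ?_ H ?_
  · rw [prod_one_special c z d (fun j hj => by
      have : 0 < (j : ℕ) := by
        rcases Nat.eq_zero_or_pos (j : ℕ) with h | h
        · exact absurd (Fin.ext h) hj
        · exact h
      simp only [hc, if_pos this])] at key
    have hcz : c z = (m : ℝ) := by simp [hc, hz]
    rw [hcz] at key
    exact key
  · intro j g g' hagree
    by_cases hj : 0 < (j : ℕ)
    · simp only [hA, if_pos hj]
      rw [hagree (p j) (hp j hj)]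
    · simp only [hA, if_neg hj]
  · intro j
    by_cases hj : 0 < (j : ℕ) <;> simp only [hc, if_pos, if_neg, hj, if_true, if_false]
    · linarith
    · positivity
  · intro g j _
    by_cases hj : 0 < (j : ℕ)
    · simp only [hA, hc, if_pos hj]
      exact hdeg _
    · simp only [hA, hc, if_neg hj, Finset.card_univ, Fintype.card_fin, le_refl]
  · intro g hg j
    by_cases hj : 0 < (j : ℕ)
    · simp only [hA, if_pos hj]
      exact hH g hg j hj
    · simp only [hA, if_neg hj]
      exact mem_univ _

lemma boundD (hn : 2 ≤ n) (hd : 1 ≤ d)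
    (hdeg : ∀ x : Fin m, ((G.neighborFinset x).card : ℝ) ≤ d)
    (hp : ∀ i : Fin n, 0 < (i : ℕ) → p i < i)
    (hH : ∀ g ∈ H, ∀ i : Fin n, 0 < (i : ℕ) → g i ∈ G.neighborFinset (g (p i)))
    (lo hi : Fin n) (hlohi : lo < hi) (hHeq : ∀ g ∈ H, g lo = g hi) :
    (H.card : ℝ) ≤ (m : ℝ) * d ^ (n - 2) := by
  classical
  set z : Fin n := ⟨0, by omega⟩ with hz
  have hhiz : z ≠ hi := by
    intro h
    have : (hi : ℕ) = 0 := by rw [← h]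
    have := Fin.lt_def.mp hlohi
    omega
  set A : Fin n → (Fin n → Fin m) → Finset (Fin m) :=
    fun j g => if j = hi then {g lo} else
      (if 0 < (j : ℕ) then G.neighborFinset (g (p j)) else univ) with hA
  set c : Fin n → ℝ := fun j => if j = hi then 1 else
      (if 0 < (j : ℕ) then d else (m : ℝ)) with hc
  have key := count_branch n A c ?_ ?_ ?_ H ?_
  · rw [prod_two_special c z hi hhiz d (fun j hjz hjhi => by
      have : 0 < (j : ℕ) := by
        rcases Nat.eq_zero_or_pos (j : ℕ) with h | h
        · exact absurd (Fin.ext h) hjz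
        · exact h
      simp only [hc, if_neg hjhi, if_pos this])] at key
    have hcz : c z = (m : ℝ) := by
      simp only [hc]
      rw [if_neg hhiz, if_neg (show ¬ 0 < ((z : Fin n) : ℕ) by simp [hz])]
    have hchi : c hi = 1 := by simp [hc]
    rw [hcz, hchi, mul_one] at key
    exact key
  · intro j g g' hagree
    by_cases hjhi : j = hi
    · simp only [hA, if_pos hjhi]
      rw [hagree lo (hjhi ▸ hlohi)]
    · by_cases hj : 0 < (j : ℕ)
      · simp only [hA, if_neg hjhi, if_pos hj]
        rw [hagree (p j) (hp j hj)]
      · simp only [hA, if_neg hjhi, if_neg hj]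
  · intro j
    by_cases hjhi : j = hi
    · simp only [hc, if_pos hjhi]; norm_num
    · by_cases hj : 0 < (j : ℕ) <;>
        simp only [hc, if_neg hjhi, if_pos, if_neg, hj, if_true, if_false]
      · linarith
      · positivity
  · intro g j _
    by_cases hjhi : j = hi
    · simp only [hA, hc, if_pos hjhi, Finset.card_singleton, Nat.cast_one, le_refl]
    · by_cases hj : 0 < (j : ℕ)
      · simp only [hA, hc, if_neg hjhi, if_pos hj]
        exact hdeg _
      · simp only [hA, hc, if_neg hjhi, if_neg hj, Finset.card_univ, Fintype.card_fin, le_refl]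
  · intro g hg j
    by_cases hjhi : j = hi
    · simp only [hA, if_pos hjhi]
      rw [Finset.mem_singleton, hjhi, ← hHeq g hg]
    · by_cases hj : 0 < (j : ℕ)
      · simp only [hA, if_neg hjhi, if_pos hj]
        exact hH g hg j hj
      · simp only [hA, if_neg hjhi, if_neg hj]
        exact mem_univ _

lemma boundC (hn : 2 ≤ n) (hd : 1 < d)
    (hdeg : ∀ x : Fin m, ((G.neighborFinset x).card : ℝ) ≤ d)
    (hp : ∀ i : Fin n, 0 < (i : ℕ) → p i < i)
    (hH : ∀ g ∈ H, ∀ i : Fin n, 0 < (i : ℕ) → g i ∈ G.neighborFinset (g (p i)))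
    (hHinj : ∀ g ∈ H, Function.Injective g) :
    (H.card : ℝ) ≤ (m : ℝ) * d * (d - 1) ^ (n - 2) := by
  classical
  set z : Fin n := ⟨0, by omega⟩ with hz
  set o : Fin n := ⟨1, by omega⟩ with ho
  set q : Fin n → Fin n := fun j => if ((p j) : ℕ) = 0 then o else p (p j) with hq
  have hqlt : ∀ j : Fin n, 2 ≤ (j : ℕ) → q j < j := by
    intro j hj
    by_cases hpj : ((p j) : ℕ) = 0
    · simp only [hq, if_pos hpj]
      exact Fin.lt_def.mpr (by simp [ho]; omega)
    · simp only [hq, if_neg hpj]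
      exact lt_trans (hp (p j) (Nat.pos_of_ne_zero hpj)) (hp j (by omega))
  set A : Fin n → (Fin n → Fin m) → Finset (Fin m) :=
    fun j g => if (j : ℕ) = 0 then univ else
      (if (j : ℕ) = 1 then G.neighborFinset (g (p j)) else
        (G.neighborFinset (g (p j))).erase (g (q j))) with hA
  set c : Fin n → ℝ := fun j => if (j : ℕ) = 0 then (m : ℝ) else
      (if (j : ℕ) = 1 then d else d - 1) with hc
  have key := count_branch n A c ?_ ?_ ?_ H ?_
  · rw [prod_two_special c z o (by simp [hz, ho, Fin.ext_iff]) (d - 1) (fun j hjz hjo => by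
      have h0 : ¬ ((j : ℕ) = 0) := fun h => hjz (Fin.ext h)
      have h1 : ¬ ((j : ℕ) = 1) := fun h => hjo (Fin.ext h)
      simp only [hc, if_neg h0, if_neg h1])] at key
    have hcz : c z = (m : ℝ) := by simp [hc, hz]
    have hco : c o = d := by simp [hc, ho]
    rw [hcz, hco] at key
    exact key
  · intro j g g' hagree
    by_cases h0 : (j : ℕ) = 0
    · simp only [hA, if_pos h0]
    · have hjpos : 0 < (j : ℕ) := Nat.pos_of_ne_zero h0
      by_cases h1 : (j : ℕ) = 1
      · simp only [hA, if_neg h0, if_pos h1]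
        rw [hagree (p j) (hp j hjpos)]
      · simp only [hA, if_neg h0, if_neg h1]
        rw [hagree (p j) (hp j hjpos), hagree (q j) (hqlt j (by omega))]
  · intro j
    by_cases h0 : (j : ℕ) = 0
    · simp only [hc, if_pos h0]; positivity
    · by_cases h1 : (j : ℕ) = 1 <;>
        simp only [hc, if_neg h0, if_pos, if_neg, h1, if_true, if_false] <;> linarith
  · intro g j hcond
    by_cases h0 : (j : ℕ) = 0
    · simp only [hA, hc, if_pos h0, Finset.card_univ, Fintype.card_fin, le_refl]
    · have hjpos : 0 < (j : ℕ) := Nat.pos_of_ne_zero h0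
      by_cases h1 : (j : ℕ) = 1
      · simp only [hA, hc, if_neg h0, if_pos h1]
        exact hdeg _
      · have hj2 : 2 ≤ (j : ℕ) := by omega
        simp only [hA, hc, if_neg h0, if_neg h1]
        have hmem : g (q j) ∈ G.neighborFinset (g (p j)) := by
          by_cases hpj : ((p j) : ℕ) = 0
          · have holt : o < j := Fin.lt_def.mpr (by simp [ho]; omega)
            have hco := hcond o holt
            have hAo : A o g = G.neighborFinset (g (p o)) := by
              simp only [hA]
              rw [if_neg (by simp [ho]), if_pos (by simp [ho])]
            rw [hAo] at hco
            have hpo : p o = p j := by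
              have h1 := hp o (by simp [ho])
              have ha : ((p o : Fin n) : ℕ) < 1 := by
                have h2 := Fin.lt_def.mp h1
                simpa [ho] using h2
              apply Fin.ext
              rw [hpj]
              omega
            simp only [hq, if_pos hpj]
            rw [← hpo]
            exact hco
          · have hppos : 0 < ((p j) : ℕ) := Nat.pos_of_ne_zero hpj
            have hplt := hp j hjpos
            have hcp := hcond (p j) hplt
            have hmem2 : g (p j) ∈ G.neighborFinset (g (p (p j))) := by
              simp only [hA, if_neg hpj] at hcp
              by_cases hp1 : ((p j) : ℕ) = 1
              · rw [if_pos hp1] at hcp; exact hcp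
              · rw [if_neg hp1] at hcp; exact Finset.mem_of_mem_erase hcp
            have hadj : G.Adj (g (p j)) (g (p (p j))) :=
              ((SimpleGraph.mem_neighborFinset _ _ _).mp hmem2).symm
            simp only [hq, if_neg hpj]
            exact (SimpleGraph.mem_neighborFinset _ _ _).mpr hadj
        rw [Finset.card_erase_of_mem hmem]
        have h1le : 1 ≤ (G.neighborFinset (g (p j))).card := Finset.card_pos.mpr ⟨_, hmem⟩
        rw [Nat.cast_sub h1le, Nat.cast_one]
        linarith [hdeg (g (p j))]
  · intro g hg j
    by_cases h0 : (j : ℕ) = 0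
    · simp only [hA, if_pos h0]
      exact mem_univ _
    · have hjpos : 0 < (j : ℕ) := Nat.pos_of_ne_zero h0
      by_cases h1 : (j : ℕ) = 1
      · simp only [hA, if_neg h0, if_pos h1]
        exact hH g hg j hjpos
      · have hj2 : 2 ≤ (j : ℕ) := by omega
        simp only [hA, if_neg h0, if_neg h1]
        apply Finset.mem_erase.mpr
        refine ⟨fun heq => ?_, hH g hg j hjpos⟩
        exact (ne_of_lt (hqlt j hj2)) (hHinj g hg heq).symm

end bounds

set_option maxHeartbeats 1000000

/-- For every connected graph `F` there is a constant `C > 0` such that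
for every admissible pair `(G, d)` with `d > 1` and at least one vertex,
`|t(F,G,d) - t_inj(F,G,d)| ≤ C / d`. -/
theorem stmt1 {α : Type*} [Fintype α] (F : SimpleGraph α) (hF : F.Connected) :
    ∃ C : ℝ, 0 < C ∧ ∀ (m : ℕ) (G : SimpleGraph (Fin m)) (d : ℝ),
      Admissible G d → 1 < d → 1 ≤ m →
      |homDensity F G d - injDensity F G d| ≤ C / d := by
  classical
  have hnone : Nonempty α := hF.nonempty
  have hnpos : 1 ≤ Fintype.card α := Fintype.card_pos
  obtain ⟨e, he⟩ := exists_order F hF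
  refine ⟨(Fintype.card α : ℝ) ^ 2 + 1, by positivity, ?_⟩
  intro m G d hGd hd hm
  haveI : DecidableRel G.Adj := Classical.decRel _
  have hd0 : (0:ℝ) < d := by linarith
  have hd1 : (0:ℝ) < d - 1 := by linarith
  have hmR : (1:ℝ) ≤ (m:ℝ) := by exact_mod_cast hm
  have hmR0 : (0:ℝ) < (m:ℝ) := by linarith
  have hdeg : ∀ x : Fin m, ((G.neighborFinset x).card : ℝ) ≤ d := by
    intro x
    have h1 := hGd.2 x
    have h2 : vdegree G x = (G.neighborFinset x).card := by
      rw [vdegree, SimpleGraph.neighborFinset, Nat.card_coe_set_eq,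
        Set.ncard_eq_toFinset_card']
    rwa [h2] at h1
  have hNcα : Nat.card α = Fintype.card α := Nat.card_eq_fintype_card
  have hNcβ : Nat.card (Fin m) = m := by simp
  -- the Finset of homomorphism sequences
  set H : Finset (Fin (Fintype.card α) → Fin m) :=
    univ.filter (fun g => ∀ a b, F.Adj (e a) (e b) → G.Adj (g a) (g b)) with hH
  have hmemH : ∀ g, g ∈ H ↔ ∀ a b, F.Adj (e a) (e b) → G.Adj (g a) (g b) := by
    intro g; rw [hH, Finset.mem_filter]; simp
  have hhom : homCount F G = H.card := by
    rw [homCount, Nat.card_congr (hom_type_equiv F G e), Nat.card_eq_fintype_card,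
      Fintype.card_subtype]
  set I : Finset (Fin (Fintype.card α) → Fin m) :=
    H.filter (fun g => Function.Injective g) with hI
  have hinjc : injCount F G = I.card := by
    rw [injCount, Nat.card_congr (inj_type_equiv F G e), Nat.card_eq_fintype_card,
      Fintype.card_subtype, hI, hH, Finset.filter_filter]
  -- parent function
  set p : Fin (Fintype.card α) → Fin (Fintype.card α) :=
    fun i => if h : 0 < (i:ℕ) then (he i h).choose else i with hpdef
  have hp : ∀ i : Fin (Fintype.card α), 0 < (i:ℕ) → p i < i := by
    intro i h
    simp only [hpdef, dif_pos h]
    exact (he i h).choose_spec.1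
  have hpadj : ∀ (i : Fin (Fintype.card α)) (h : 0 < (i:ℕ)), F.Adj (e (p i)) (e i) := by
    intro i h
    simp only [hpdef, dif_pos h]
    exact (he i h).choose_spec.2
  have hHnbr : ∀ g ∈ H, ∀ i : Fin (Fintype.card α), 0 < (i : ℕ) →
      g i ∈ G.neighborFinset (g (p i)) := by
    intro g hg i hi
    exact (SimpleGraph.mem_neighborFinset _ _ _).mpr
      (((hmemH g).mp hg) _ _ (hpadj i hi))
  have hB : (H.card : ℝ) ≤ (m : ℝ) * d ^ (Fintype.card α - 1) :=
    boundB hnpos hd.le hdeg hp hHnbr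
  -- case distinction on the number of vertices
  rcases Nat.lt_or_ge (Fintype.card α) 2 with hn1 | hn2
  · -- single vertex case
    have hcard1 : Fintype.card α = 1 := by omega
    have hHuniv : H = univ := by
      rw [hH]
      apply Finset.filter_true_of_mem
      intro g _ a b hab
      have : a = b := by
        apply Fin.ext
        have := a.isLt; have := b.isLt
        omega
      rw [this] at hab
      exact absurd hab (F.irrefl)
    have hIuniv : I = univ := by
      rw [hI, hHuniv]
      apply Finset.filter_true_of_mem
      intro g _ a b hab
      apply Fin.ext
      have := a.isLt; have := b.isLt
      omega
    have hcarduniv : (univ : Finset (Fin (Fintype.card α) → Fin m)).card = m := by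
      rw [Finset.card_univ, Fintype.card_fun]
      simp [hcard1]
    have hhd : homDensity F G d = 1 := by
      rw [homDensity, numComponents_eq_one F hF, hhom, hHuniv, hcarduniv, hNcα, hNcβ, hcard1]
      simp
      omega
    have hid : injDensity F G d = 1 := by
      rw [injDensity, numComponents_eq_one F hF, numBigComponents_eq_zero F hcard1,
        hinjc, hIuniv, hcarduniv, hNcα, hNcβ, hcard1]
      simp
      omega
    rw [hhd, hid]
    simp only [sub_self, abs_zero]
    positivity
  · -- main case
    have hC : (I.card : ℝ) ≤ (m : ℝ) * d * (d - 1) ^ (Fintype.card α - 2) :=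
      boundC hn2 hd hdeg hp (fun g hg => hHnbr g (Finset.mem_filter.mp hg).1)
        (fun g hg => (Finset.mem_filter.mp hg).2)
    set Nn : Finset (Fin (Fintype.card α) → Fin m) :=
      H.filter (fun g => ¬ Function.Injective g) with hNndef
    have hsplit : I.card + Nn.card = H.card := by
      rw [hI, hNndef]
      exact Finset.card_filter_add_card_filter_not _
    set P : Finset (Fin (Fintype.card α) × Fin (Fintype.card α)) :=
      univ.filter (fun q => q.1 ≠ q.2) with hP
    have hsub : Nn ⊆ P.biUnion (fun q => H.filter (fun g => g q.1 = g q.2)) := by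
      intro g hg
      rw [hNndef, Finset.mem_filter] at hg
      obtain ⟨hgH, hgni⟩ := hg
      obtain ⟨a, b, hab, hne⟩ := Function.not_injective_iff.mp hgni
      apply Finset.mem_biUnion.mpr
      exact ⟨(a, b), by rw [hP]; simp [hne], Finset.mem_filter.mpr ⟨hgH, hab⟩⟩
    have hpair : ∀ q ∈ P, ((H.filter (fun g => g q.1 = g q.2)).card : ℝ)
        ≤ (m : ℝ) * d ^ (Fintype.card α - 2) := by
      intro q hq
      have hne : q.1 ≠ q.2 := by
        rw [hP] at hq
        simpa using (Finset.mem_filter.mp hq).2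
      rcases lt_or_gt_of_ne hne with hlt | hgt
      · exact boundD hn2 hd.le hdeg hp
          (fun g hg => hHnbr g (Finset.mem_filter.mp hg).1)
          q.1 q.2 hlt (fun g hg => (Finset.mem_filter.mp hg).2)
      · exact boundD hn2 hd.le hdeg hp
          (fun g hg => hHnbr g (Finset.mem_filter.mp hg).1)
          q.2 q.1 hgt (fun g hg => ((Finset.mem_filter.mp hg).2).symm)
    have hDD : (Nn.card : ℝ)
        ≤ (Fintype.card α : ℝ) ^ 2 * ((m : ℝ) * d ^ (Fintype.card α - 2)) := by
      have h1 : Nn.card ≤ ∑ q ∈ P, (H.filter (fun g => g q.1 = g q.2)).card :=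
        le_trans (Finset.card_le_card hsub) Finset.card_biUnion_le
      have h2 : (Nn.card : ℝ) ≤ ∑ q ∈ P, ((H.filter (fun g => g q.1 = g q.2)).card : ℝ) := by
        exact_mod_cast h1
      have h3 : ∑ q ∈ P, ((H.filter (fun g => g q.1 = g q.2)).card : ℝ)
          ≤ ∑ _q ∈ P, (m : ℝ) * d ^ (Fintype.card α - 2) := Finset.sum_le_sum hpair
      rw [Finset.sum_const, nsmul_eq_mul] at h3
      have hPcard : (P.card : ℝ) ≤ (Fintype.card α : ℝ) ^ 2 := by
        have h4 : P.card ≤ Fintype.card α * Fintype.card α := by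
          rw [hP]
          calc (univ.filter (fun q : Fin (Fintype.card α) × Fin (Fintype.card α) =>
                q.1 ≠ q.2)).card
              ≤ (univ : Finset (Fin (Fintype.card α) × Fin (Fintype.card α))).card :=
                Finset.card_filter_le _ _
            _ = Fintype.card α * Fintype.card α := by
                rw [Finset.card_univ, Fintype.card_prod, Fintype.card_fin]
        calc (P.card : ℝ) ≤ ((Fintype.card α * Fintype.card α : ℕ) : ℝ) := by exact_mod_cast h4
          _ = (Fintype.card α : ℝ) ^ 2 := by push_cast; ring
      calc (Nn.card : ℝ) ≤ (P.card : ℝ) * ((m : ℝ) * d ^ (Fintype.card α - 2)) :=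
          le_trans h2 h3
        _ ≤ (Fintype.card α : ℝ) ^ 2 * ((m : ℝ) * d ^ (Fintype.card α - 2)) :=
          mul_le_mul_of_nonneg_right hPcard (by positivity)
    -- arithmetic
    have hk1 : Fintype.card α - 1 = (Fintype.card α - 2) + 1 := by omega
    set u : ℝ := (d - 1) ^ (Fintype.card α - 2) with hu_def
    set v : ℝ := d ^ (Fintype.card α - 2) with hv_def
    have hu : 0 < u := by positivity
    have hv : 0 < v := by positivity
    have huv : u ≤ v := pow_le_pow_left₀ (by linarith) (by linarith) _
    have eq1 : homDensity F G d = (H.card : ℝ) / ((m : ℝ) * (v * d)) := by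
      rw [homDensity, numComponents_eq_one F hF, hhom, hNcα, hNcβ, pow_one, hk1, pow_succ]
    have eq2 : injDensity F G d = (I.card : ℝ) / ((m : ℝ) * d * u) := by
      rw [injDensity, numComponents_eq_one F hF, numBigComponents_eq_one F hF hn2,
        hinjc, hNcα, hNcβ, pow_one, pow_one,
        show Fintype.card α - 1 - 1 = Fintype.card α - 2 from by omega]
    set X : ℝ := (H.card : ℝ) with hX_def
    set Y : ℝ := (I.card : ℝ) with hY_def
    set Z : ℝ := (Nn.card : ℝ) with hZ_def
    have hXYZ : X = Y + Z := by
      rw [hX_def, hY_def, hZ_def, ← hsplit]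
      push_cast
      ring
    have hY0 : (0:ℝ) ≤ Y := Nat.cast_nonneg _
    have hZ0 : (0:ℝ) ≤ Z := Nat.cast_nonneg _
    have hYX : Y ≤ X := by linarith
    set nR : ℝ := (Fintype.card α : ℝ) with hnR_def
    have hnR2 : (2:ℝ) ≤ nR := by rw [hnR_def]; exact_mod_cast hn2
    set kR : ℝ := ((Fintype.card α - 2 : ℕ) : ℝ) with hkR_def
    have hkR0 : (0:ℝ) ≤ kR := Nat.cast_nonneg _
    have hkn : kR ≤ nR := by
      rw [hkR_def, hnR_def]
      exact_mod_cast Nat.sub_le _ _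
    have hkn2 : kR ≤ nR ^ 2 + 1 := by nlinarith
    -- Bernoulli
    have hber : (1 - kR / d) * v ≤ u := by
      have h1 : (1:ℝ) + ((Fintype.card α - 2 : ℕ) : ℝ) * (-1/d) ≤ (1 + (-1/d)) ^ (Fintype.card α - 2) := by
        apply one_add_mul_le_pow
        have h2 : (1:ℝ)/d ≤ 1 := by
          rw [div_le_one hd0]
          linarith
        have h4 : (-1:ℝ)/d = -(1/d) := by ring
        rw [h4]
        linarith
      have h2 : ((1:ℝ) + (-1/d)) ^ (Fintype.card α - 2) * v = u := by
        rw [hv_def, hu_def, ← mul_pow]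
        congr 1
        field_simp
        ring
      calc (1 - kR / d) * v = (1 + kR * (-1/d)) * v := by ring
        _ ≤ (1 + (-1/d)) ^ (Fintype.card α - 2) * v := by
            apply mul_le_mul_of_nonneg_right _ hv.le
            rw [hkR_def]
            exact h1
        _ = u := h2
    have hber' : v * d - kR * v ≤ u * d := by
      have h2 := mul_le_mul_of_nonneg_right hber hd0.le
      have h3 : (1 - kR / d) * v * d = v * d - kR * v := by
        field_simp
      rw [h3] at h2
      exact h2
    have hZbound : Z ≤ nR ^ 2 * ((m:ℝ) * v) := hDD
    have hYbound : Y ≤ (m:ℝ) * d * u := hC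
    rw [eq1, eq2, abs_sub_le_iff]
    constructor
    · have step1 : Y / ((m:ℝ) * (v * d)) ≤ Y / ((m:ℝ) * d * u) := by
        apply div_le_div_of_nonneg_left hY0 (by positivity)
        nlinarith
      calc X / ((m:ℝ) * (v * d)) - Y / ((m:ℝ) * d * u)
          ≤ X / ((m:ℝ) * (v * d)) - Y / ((m:ℝ) * (v * d)) := by linarith
        _ = Z / ((m:ℝ) * (v * d)) := by rw [hXYZ]; ring
        _ ≤ (nR ^ 2 * ((m:ℝ) * v)) / ((m:ℝ) * (v * d)) :=
            (div_le_div_iff_of_pos_right (by positivity)).mpr hZbound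
        _ = nR ^ 2 / d := by
            field_simp
        _ ≤ (nR ^ 2 + 1) / d :=
            (div_le_div_iff_of_pos_right hd0).mpr (by linarith)
    · have step2 : Y / ((m:ℝ) * (v * d)) ≤ X / ((m:ℝ) * (v * d)) :=
        (div_le_div_iff_of_pos_right (by positivity)).mpr hYX
      have e3 : Y / ((m:ℝ) * d * u) - Y / ((m:ℝ) * (v * d))
          = (Y / ((m:ℝ) * d)) * ((v - u) / (u * v)) := by
        field_simp
      have hYdiv : Y / ((m:ℝ) * d) ≤ u := by
        rw [div_le_iff₀ (by positivity)]
        nlinarith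
      have hfrac : (0:ℝ) ≤ (v - u) / (u * v) := by
        apply div_nonneg (by linarith) (by positivity)
      calc Y / ((m:ℝ) * d * u) - X / ((m:ℝ) * (v * d))
          ≤ Y / ((m:ℝ) * d * u) - Y / ((m:ℝ) * (v * d)) := by linarith
        _ = (Y / ((m:ℝ) * d)) * ((v - u) / (u * v)) := e3
        _ ≤ u * ((v - u) / (u * v)) := mul_le_mul_of_nonneg_right hYdiv hfrac
        _ = (v - u) / v := by
            field_simp
        _ ≤ kR / d := by
            rw [div_le_div_iff₀ hv hd0]
            nlinarith
        _ ≤ (nR ^ 2 + 1) / d :=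
            (div_le_div_iff_of_pos_right hd0).mpr hkn2
end

section
/- Let (Γ,δ) be an admissible pair with at least one vertex, and let α = 2e(Γ)/(v(Γ)·δ) be its normalized average degree. For each n, let Γ^{□n} be the n-fold Cartesian sum of Γ, i.e., the graph on vertex set V(Γ)^n in which two n-tuples are adjacent if and only if they differ in exactly one coordinate and in that coordinate the two entries are adjacent in Γ. Then the sequence (Γ^{□n}, nδ) is α-regular: for every ε > 0, the proportion of vertices x of Γ^{□n} with |deg(x)/(nδ) − α| ≥ ε tends to 0 as n → ∞. -/
open Filter Topology

/-- The `n`-fold Cartesian sum (box power) of a graph: two `n`-tuples are adjacent iff they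
differ in exactly one coordinate, and in that coordinate the entries are adjacent. -/
def boxPow {V : Type*} (G : SimpleGraph V) (n : ℕ) : SimpleGraph (Fin n → V) where
  Adj x y := ∃ i, G.Adj (x i) (y i) ∧ ∀ j, j ≠ i → x j = y j
  symm := by
    constructor
    rintro x y ⟨i, hadj, hj⟩
    exact ⟨i, hadj.symm, fun j hji => (hj j hji).symm⟩
  loopless := by
    constructor
    rintro x ⟨i, hadj, -⟩
    exact G.irrefl hadj

lemma vdegree_boxPow {V : Type*} [Fintype V] (Γ : SimpleGraph V) (n : ℕ) (x : Fin n → V) :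
    vdegree (boxPow Γ n) x = ∑ i, vdegree Γ (x i) := by
  classical
  have e : (Σ i : Fin n, Γ.neighborSet (x i)) ≃ (boxPow Γ n).neighborSet x := by
    refine Equiv.ofBijective
      (fun p => ⟨Function.update x p.1 p.2.1, p.1, by
        simp only [Function.update_self]; exact p.2.2, fun j hj => by
          simp [Function.update_of_ne hj]⟩) ⟨?_, ?_⟩
    · rintro ⟨i, v, hv⟩ ⟨j, w, hw⟩ h
      simp only [Subtype.mk.injEq] at h
      replace h : Function.update x i v = Function.update x j w := congrArg Subtype.val h
      by_cases hij : i = j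
      · subst hij
        have := congrFun h i
        simp at this
        subst this
        rfl
      · have := congrFun h i
        rw [Function.update_self, Function.update_of_ne hij] at this
        exact absurd (this ▸ hv) (Γ.irrefl)
    · rintro ⟨y, hy⟩
      obtain ⟨i, hadj, hj⟩ := hy
      refine ⟨⟨i, y i, hadj⟩, ?_⟩
      ext j
      by_cases h : j = i
      · subst h; simp
      · simp [Function.update_of_ne h, hj j h]
  have := Nat.card_congr e
  rw [Nat.card_eq_fintype_card, Fintype.card_sigma] at this
  unfold vdegree
  rw [← this]
  congr 1
  ext i
  rw [Nat.card_eq_fintype_card]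

lemma sum_prod_eval {V : Type*} [Fintype V] (f : V → ℝ) (hf : ∑ v, f v = 0)
    {n : ℕ} (i j : Fin n) :
    ∑ x : Fin n → V, f (x i) * f (x j) =
      if i = j then (∑ v, f v ^ 2) * (Fintype.card V : ℝ) ^ (n - 1) else 0 := by
  classical
  split_ifs with h
  · subst h
    set g : Fin n → V → ℝ := fun k v => if k = i then f v ^ 2 else 1 with hg
    have key : ∀ x : Fin n → V, f (x i) * f (x i) = ∏ k, g k (x k) := by
      intro x
      rw [← Finset.mul_prod_erase Finset.univ _ (Finset.mem_univ i),
        Finset.prod_eq_one (fun k hk => if_neg (Finset.ne_of_mem_erase hk))]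
      simp [hg, sq]
    calc ∑ x : Fin n → V, f (x i) * f (x i)
        = ∑ x : Fin n → V, ∏ k, g k (x k) := Finset.sum_congr rfl fun x _ => key x
      _ = ∏ k, ∑ v, g k v := (Fintype.prod_sum _).symm
      _ = (∑ v, f v ^ 2) * (Fintype.card V : ℝ) ^ (n - 1) := by
          rw [← Finset.mul_prod_erase Finset.univ _ (Finset.mem_univ i)]
          congr 1
          · simp [hg]
          · rw [Finset.prod_congr rfl
              (fun k hk => show ∑ v, g k v = (Fintype.card V : ℝ) by
                simp [hg, if_neg (Finset.ne_of_mem_erase hk)]),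
              Finset.prod_const, Finset.card_erase_of_mem (Finset.mem_univ i),
              Finset.card_univ, Fintype.card_fin]
  · set g : Fin n → V → ℝ := fun k v => if k = i then f v else if k = j then f v else 1 with hg
    have key : ∀ x : Fin n → V, f (x i) * f (x j) = ∏ k, g k (x k) := by
      intro x
      rw [← Finset.mul_prod_erase Finset.univ _ (Finset.mem_univ i),
        ← Finset.mul_prod_erase _ _
          (Finset.mem_erase.mpr ⟨Ne.symm h, Finset.mem_univ j⟩),
        Finset.prod_eq_one (fun k hk => ?_)]
      · simp [hg, if_neg (Ne.symm h)]
      · have hk1 : k ≠ j := Finset.ne_of_mem_erase hk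
        have hk2 : k ≠ i := Finset.ne_of_mem_erase (Finset.mem_of_mem_erase hk)
        simp [hg, hk1, hk2]
    calc ∑ x : Fin n → V, f (x i) * f (x j)
        = ∑ x : Fin n → V, ∏ k, g k (x k) := Finset.sum_congr rfl fun x _ => key x
      _ = ∏ k, ∑ v, g k v := (Fintype.prod_sum _).symm
      _ = 0 := Finset.prod_eq_zero (Finset.mem_univ i) (by simp [hg, hf])

lemma second_moment {V : Type*} [Fintype V] (f : V → ℝ) (hf : ∑ v, f v = 0) (n : ℕ) :
    ∑ x : Fin n → V, (∑ i, f (x i)) ^ 2 =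
      n * ((∑ v, f v ^ 2) * (Fintype.card V : ℝ) ^ (n - 1)) := by
  classical
  calc ∑ x : Fin n → V, (∑ i, f (x i)) ^ 2
      = ∑ x : Fin n → V, ∑ i, ∑ j, f (x i) * f (x j) := by
        refine Finset.sum_congr rfl fun x _ => ?_
        rw [sq, Finset.sum_mul_sum]
    _ = ∑ i, ∑ j, ∑ x : Fin n → V, f (x i) * f (x j) := by
        rw [Finset.sum_comm]
        exact Finset.sum_congr rfl fun i _ => Finset.sum_comm
    _ = ∑ _i : Fin n, (∑ v, f v ^ 2) * (Fintype.card V : ℝ) ^ (n - 1) := by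
        refine Finset.sum_congr rfl fun i _ => ?_
        simp_rw [sum_prod_eval f hf i]
        simp
    _ = n * ((∑ v, f v ^ 2) * (Fintype.card V : ℝ) ^ (n - 1)) := by
        rw [Finset.sum_const, Finset.card_univ, Fintype.card_fin, nsmul_eq_mul]

/-- If `(Γ, δ)` is admissible with normalized average degree
`α = 2e(Γ)/(v(Γ)·δ)`, then the sequence `(Γ^{□n}, nδ)` is `α`-regular. -/
theorem stmt4 {V : Type*} [Fintype V] [Nonempty V] (Γ : SimpleGraph V) (δ : ℝ)
    (hadm : Admissible Γ δ) (α : ℝ)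
    (hα : α = 2 * (edgeCount Γ : ℝ) / ((Nat.card V : ℝ) * δ)) :
    ∀ ε : ℝ, 0 < ε →
      Tendsto (fun n : ℕ =>
          (Nat.card {x : Fin n → V //
              ε ≤ |(vdegree (boxPow Γ n) x : ℝ) / (n * δ) - α|} : ℝ) /
            (Nat.card (Fin n → V) : ℝ))
        atTop (𝓝 0) := by
  classical
  intro ε hε
  obtain ⟨hδ1, hdeg⟩ := hadm
  have hδ0 : (0:ℝ) < δ := lt_of_lt_of_le one_pos hδ1
  have hVpos : (0:ℝ) < (Fintype.card V : ℝ) := by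
    exact_mod_cast Fintype.card_pos
  set f : V → ℝ := fun v => (vdegree Γ v : ℝ) / δ - α with hfdef
  have hvdeg : ∀ v, vdegree Γ v = Γ.degree v := fun v => by
    rw [vdegree, Nat.card_eq_fintype_card, Γ.card_neighborSet_eq_degree]
  have hedge : edgeCount Γ = Γ.edgeFinset.card := by
    rw [edgeCount, Nat.card_eq_fintype_card, SimpleGraph.edgeFinset, Set.toFinset_card]
  have hhs : ∑ v, (vdegree Γ v : ℝ) = 2 * (edgeCount Γ : ℝ) := by
    have : ∑ v, vdegree Γ v = 2 * edgeCount Γ := by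
      simp only [hvdeg]
      rw [SimpleGraph.sum_degrees_eq_twice_card_edges, hedge]
    exact_mod_cast this
  have hsum : ∑ v, f v = 0 := by
    simp only [hfdef]
    rw [Finset.sum_sub_distrib, ← Finset.sum_div, hhs, Finset.sum_const,
      Finset.card_univ, nsmul_eq_mul, hα, Nat.card_eq_fintype_card]
    field_simp
    ring
  set S2 : ℝ := ∑ v, f v ^ 2 with hS2
  have hS2nn : 0 ≤ S2 := Finset.sum_nonneg fun v _ => sq_nonneg _
  set C : ℝ := S2 / ((Fintype.card V : ℝ) * ε ^ 2) with hC
  have key : ∀ n : ℕ, 1 ≤ n →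
      (Nat.card {x : Fin n → V //
          ε ≤ |(vdegree (boxPow Γ n) x : ℝ) / (n * δ) - α|} : ℝ) /
        (Nat.card (Fin n → V) : ℝ) ≤ C / n := by
    intro n hn
    have hn0 : (0:ℝ) < n := by exact_mod_cast hn
    have hdev : ∀ x : Fin n → V,
        (vdegree (boxPow Γ n) x : ℝ) / (n * δ) - α = (∑ i, f (x i)) / n := by
      intro x
      rw [vdegree_boxPow]
      push_cast
      simp only [hfdef]
      rw [Finset.sum_sub_distrib, Finset.sum_const, Finset.card_univ,
        Fintype.card_fin, nsmul_eq_mul, ← Finset.sum_div]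
      field_simp
    set B := Finset.univ.filter (fun x : Fin n → V => ε ≤ |(∑ i, f (x i)) / n|) with hB
    have hcard : (Nat.card {x : Fin n → V //
        ε ≤ |(vdegree (boxPow Γ n) x : ℝ) / (n * δ) - α|} : ℕ) = B.card := by
      rw [Nat.card_eq_fintype_card, Fintype.card_subtype]
      congr 1
      apply Finset.filter_congr
      intro x _
      rw [hdev x]
    have cheb : (B.card : ℝ) * (n * ε) ^ 2 ≤ n * (S2 * (Fintype.card V : ℝ) ^ (n - 1)) := by
      rw [← second_moment f hsum n]
      calc (B.card : ℝ) * (n * ε) ^ 2 = ∑ _x ∈ B, (n * ε) ^ 2 := by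
            rw [Finset.sum_const, nsmul_eq_mul]
        _ ≤ ∑ x ∈ B, (∑ i, f (x i)) ^ 2 := by
            refine Finset.sum_le_sum fun x hx => ?_
            rw [hB, Finset.mem_filter] at hx
            have hx2 := hx.2
            rw [abs_div, abs_of_pos hn0, le_div_iff₀ hn0] at hx2
            rw [← sq_abs (∑ i, f (x i))]
            refine pow_le_pow_left₀ (by positivity) ?_ 2
            calc (n:ℝ) * ε = ε * n := by ring
              _ ≤ |∑ i, f (x i)| := hx2
        _ ≤ ∑ x : Fin n → V, (∑ i, f (x i)) ^ 2 :=
            Finset.sum_le_sum_of_subset_of_nonneg (Finset.subset_univ B)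
              (fun x _ _ => sq_nonneg _)
    have hpow : (Fintype.card V : ℝ) ^ n = (Fintype.card V : ℝ) ^ (n - 1) * (Fintype.card V : ℝ) := by
      rw [← pow_succ]
      congr 1
      omega
    have hcardfun : (Nat.card (Fin n → V) : ℝ) = (Fintype.card V : ℝ) ^ n := by
      rw [Nat.card_eq_fintype_card, Fintype.card_fun, Fintype.card_fin]
      push_cast
      ring
    rw [hcard, hcardfun, hC, div_le_div_iff₀ (by positivity) hn0, div_mul_eq_mul_div,
      le_div_iff₀ (by positivity)]
    have h2 : (B.card : ℝ) * (n * ε ^ 2) ≤ S2 * (Fintype.card V : ℝ) ^ (n - 1) := by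
      refine le_of_mul_le_mul_right ?_ hn0
      nlinarith [cheb]
    nlinarith [mul_le_mul_of_nonneg_right h2 hVpos.le, hpow,
      pow_pos hVpos (n - 1), hn0]
  refine squeeze_zero' ?_ ?_ (tendsto_const_div_atTop_nhds_zero_nat C)
  · exact Filter.Eventually.of_forall fun n => by positivity
  · exact Filter.eventually_atTop.mpr ⟨1, fun n hn => key n hn⟩
end

section
/- Let (G_n,d_n) be a sequence of admissible pairs with d_n > 1 and v(G_n) ≥ 1 for all n, which has large essential girth, and suppose v(G_n) → ∞ and there is a constant C with d_n ≤ C·v(G_n) for all n. Then 2e(G_n)/v(G_n)² → 0 as n → ∞. -/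
open Filter Topology

/-- A sequence of admissible pairs `(Gₙ, dₙ)` has large essential girth if
`t_inj(C_k, Gₙ, dₙ) → 0` for every `k ≥ 3`. -/
def LargeEssentialGirth (V : ℕ → Type) (G : ∀ n, SimpleGraph (V n)) (d : ℕ → ℝ) : Prop :=
  ∀ k : ℕ, 3 ≤ k →
    Tendsto (fun n => injDensity (SimpleGraph.cycleGraph k) (G n) (d n)) atTop (𝓝 0)

section Aux

open Finset

set_option linter.unusedSectionVars false

variable {V : Type*} [Fintype V] [DecidableEq V] (G : SimpleGraph V) [DecidableRel G.Adj]

private lemma hdeg (b : V) : ∑ a, (if G.Adj a b then (1:ℕ) else 0) = G.degree b := by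
  rw [Finset.sum_boole, Nat.cast_id]
  have : Finset.univ.filter (fun a => G.Adj a b) = G.neighborFinset b := by
    ext a
    simp [SimpleGraph.adj_comm]
  rw [this, SimpleGraph.degree]

private lemma hsum1 :
    ∑ p : V × V, #(univ.filter fun b => G.Adj p.1 b ∧ G.Adj p.2 b)
      = ∑ x, G.degree x ^ 2 := by
  have hsplit : ∀ (a c b : V), (if G.Adj a b ∧ G.Adj c b then (1:ℕ) else 0)
      = (if G.Adj a b then (1:ℕ) else 0) * (if G.Adj c b then (1:ℕ) else 0) := by
    intro a c b
    by_cases h1 : G.Adj a b <;> by_cases h2 : G.Adj c b <;> simp [h1, h2]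
  calc ∑ p : V × V, #(univ.filter fun b => G.Adj p.1 b ∧ G.Adj p.2 b)
      = ∑ a, ∑ c, ∑ b, (if G.Adj a b then (1:ℕ) else 0) * (if G.Adj c b then (1:ℕ) else 0) := by
        rw [Fintype.sum_prod_type]
        refine Finset.sum_congr rfl fun a _ => Finset.sum_congr rfl fun c _ => ?_
        rw [Finset.card_filter]
        exact Finset.sum_congr rfl fun b _ => hsplit a c b
    _ = ∑ a, ∑ b, ∑ c, (if G.Adj a b then (1:ℕ) else 0) * (if G.Adj c b then (1:ℕ) else 0) := by
        exact Finset.sum_congr rfl fun a _ => Finset.sum_comm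
    _ = ∑ b, ∑ a, ∑ c, (if G.Adj a b then (1:ℕ) else 0) * (if G.Adj c b then (1:ℕ) else 0) :=
        Finset.sum_comm
    _ = ∑ b, (∑ a, (if G.Adj a b then (1:ℕ) else 0)) * (∑ c, (if G.Adj c b then (1:ℕ) else 0)) := by
        refine Finset.sum_congr rfl fun b _ => ?_
        rw [Finset.sum_mul]
        exact Finset.sum_congr rfl fun a _ => (Finset.mul_sum _ _ _).symm
    _ = ∑ x, G.degree x ^ 2 := by
        refine Finset.sum_congr rfl fun b _ => ?_
        rw [hdeg, sq]

private lemma key_hom (a b c e : V) (hab : G.Adj a b) (hcb : G.Adj c b) (hae : G.Adj a e)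
    (hce : G.Adj c e) (hac : a ≠ c) (hbe : b ≠ e) :
    ∃ f : SimpleGraph.cycleGraph 4 →g G, Function.Injective f ∧ ⇑f = ![a, b, c, e] := by
  refine ⟨⟨![a, b, c, e], ?_⟩, ?_, rfl⟩
  · intro u w huw
    fin_cases u <;> fin_cases w <;>
      first
        | exact absurd huw (by decide)
        | exact hab | exact hab.symm | exact hcb | exact hcb.symm
        | exact hae | exact hae.symm | exact hce | exact hce.symm
  · have h1 : a ≠ b := G.ne_of_adj hab
    have h2 : b ≠ c := (G.ne_of_adj hcb).symm
    have h3 : a ≠ e := G.ne_of_adj hae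
    have h4 : c ≠ e := G.ne_of_adj hce
    intro u w huw
    fin_cases u <;> fin_cases w <;>
      first
        | rfl
        | exact absurd huw h1 | exact absurd huw h1.symm
        | exact absurd huw h2 | exact absurd huw h2.symm
        | exact absurd huw h3 | exact absurd huw h3.symm
        | exact absurd huw h4 | exact absurd huw h4.symm
        | exact absurd huw hac | exact absurd huw hac.symm
        | exact absurd huw hbe | exact absurd huw hbe.symm

private lemma T1_le_inj :
    #(univ.filter (fun q : (V × V) × V × V =>
        (G.Adj q.1.1 q.2.1 ∧ G.Adj q.1.2 q.2.1) ∧ (G.Adj q.1.1 q.2.2 ∧ G.Adj q.1.2 q.2.2)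
          ∧ q.1.1 ≠ q.1.2 ∧ q.2.1 ≠ q.2.2))
      ≤ injCount (SimpleGraph.cycleGraph 4) G := by
  set T := univ.filter (fun q : (V × V) × V × V =>
        (G.Adj q.1.1 q.2.1 ∧ G.Adj q.1.2 q.2.1) ∧ (G.Adj q.1.1 q.2.2 ∧ G.Adj q.1.2 q.2.2)
          ∧ q.1.1 ≠ q.1.2 ∧ q.2.1 ≠ q.2.2) with hT
  have hfin : Finite {f : SimpleGraph.cycleGraph 4 →g G // Function.Injective f} :=
    Finite.of_injective (fun f => ((f.1 : SimpleGraph.cycleGraph 4 →g G) : Fin 4 → V))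
      (fun f g hfg => Subtype.ext (DFunLike.coe_injective hfg))
  have hmem : ∀ q : {q // q ∈ T},
      (G.Adj q.1.1.1 q.1.2.1 ∧ G.Adj q.1.1.2 q.1.2.1) ∧
        (G.Adj q.1.1.1 q.1.2.2 ∧ G.Adj q.1.1.2 q.1.2.2) ∧
          q.1.1.1 ≠ q.1.1.2 ∧ q.1.2.1 ≠ q.1.2.2 := by
    intro q
    exact (Finset.mem_filter.mp q.2).2
  choose F hF1 hF2 using fun q : {q // q ∈ T} =>
    key_hom G q.1.1.1 q.1.2.1 q.1.1.2 q.1.2.2 (hmem q).1.1 (hmem q).1.2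
      (hmem q).2.1.1 (hmem q).2.1.2 (hmem q).2.2.1 (hmem q).2.2.2
  have hinj : Function.Injective
      (fun q : {q // q ∈ T} => (⟨F q, hF1 q⟩ :
        {f : SimpleGraph.cycleGraph 4 →g G // Function.Injective f})) := by
    intro q q' h
    have hcoe : ⇑(F q) = ⇑(F q') := by
      simpa [Subtype.ext_iff] using congrArg
        (fun x : {f : SimpleGraph.cycleGraph 4 →g G // Function.Injective f} =>
          (x.1 : Fin 4 → V)) h
    rw [hF2 q, hF2 q'] at hcoe
    have e0 := congrFun hcoe 0
    have e1 := congrFun hcoe 1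
    have e2 := congrFun hcoe 2
    have e3 := congrFun hcoe 3
    simp only [Matrix.cons_val_zero, Matrix.cons_val_one, Matrix.head_cons] at e0 e1 e2 e3
    apply Subtype.ext
    apply Prod.ext
    · apply Prod.ext
      · exact e0
      · exact e2
    · apply Prod.ext
      · exact e1
      · exact e3
  calc #T = Nat.card {q // q ∈ T} := by
        rw [Nat.card_eq_fintype_card, Fintype.card_coe]
    _ ≤ injCount (SimpleGraph.cycleGraph 4) G := Nat.card_le_card_of_injective _ hinj

private lemma count_main :
    ∑ p : V × V, #(univ.filter fun b => G.Adj p.1 b ∧ G.Adj p.2 b) ^ 2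
      ≤ 2 * (∑ x, G.degree x ^ 2) + injCount (SimpleGraph.cycleGraph 4) G := by
  classical
  have hT1 := T1_le_inj G
  set hh : V × V → V → ℕ := fun p b => if G.Adj p.1 b ∧ G.Adj p.2 b then (1:ℕ) else 0 with hhh
  have step1 : ∀ p : V × V, #(univ.filter fun b => G.Adj p.1 b ∧ G.Adj p.2 b) ^ 2
      = ∑ b, ∑ e, hh p b * hh p e := by
    intro p
    rw [Finset.card_filter, sq, Finset.sum_mul_sum]
  have point : ∀ (p : V × V) (b e : V),
      hh p b * hh p e
      ≤ (if (G.Adj p.1 b ∧ G.Adj p.2 b) ∧ (G.Adj p.1 e ∧ G.Adj p.2 e) ∧ p.1 ≠ p.2 ∧ b ≠ e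
            then (1:ℕ) else 0)
        + (if p.1 = p.2 then (1:ℕ) else 0) * (hh p b * hh p e)
        + (if b = e then (1:ℕ) else 0) * (hh p b * hh p e) := by
    intro p b e
    by_cases h1 : G.Adj p.1 b ∧ G.Adj p.2 b <;> by_cases h2 : G.Adj p.1 e ∧ G.Adj p.2 e <;>
      by_cases h3 : p.1 = p.2 <;> by_cases h4 : b = e <;> simp [hhh, h1, h2, h3, h4]
  have hGood : ∑ p : V × V, ∑ b, ∑ e,
      (if (G.Adj p.1 b ∧ G.Adj p.2 b) ∧ (G.Adj p.1 e ∧ G.Adj p.2 e) ∧ p.1 ≠ p.2 ∧ b ≠ e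
        then (1:ℕ) else 0)
      = #(univ.filter (fun q : (V × V) × V × V =>
        (G.Adj q.1.1 q.2.1 ∧ G.Adj q.1.2 q.2.1) ∧ (G.Adj q.1.1 q.2.2 ∧ G.Adj q.1.2 q.2.2)
          ∧ q.1.1 ≠ q.1.2 ∧ q.2.1 ≠ q.2.2)) := by
    conv_rhs => rw [Finset.card_filter, Fintype.sum_prod_type]
    refine Finset.sum_congr rfl fun p _ => ?_
    rw [Fintype.sum_prod_type]
  have hA : ∑ p : V × V, ∑ b, ∑ e, (if p.1 = p.2 then (1:ℕ) else 0) * (hh p b * hh p e)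
      = ∑ x, G.degree x ^ 2 := by
    have h1 : ∀ p : V × V, ∑ b, ∑ e, (if p.1 = p.2 then (1:ℕ) else 0) * (hh p b * hh p e)
        = (if p.1 = p.2 then (1:ℕ) else 0)
            * #(univ.filter fun b => G.Adj p.1 b ∧ G.Adj p.2 b) ^ 2 := by
      intro p
      rw [step1 p, Finset.mul_sum]
      exact Finset.sum_congr rfl fun b _ => (Finset.mul_sum _ _ _).symm
    rw [Finset.sum_congr rfl fun p _ => h1 p, Fintype.sum_prod_type]
    simp only [ite_mul, one_mul, zero_mul]
    have h2 : ∀ a : V, ∑ c : V,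
        (if a = c then #(univ.filter fun b => G.Adj a b ∧ G.Adj c b) ^ 2 else 0)
        = G.degree a ^ 2 := by
      intro a
      rw [Finset.sum_ite_eq]
      have : (univ.filter fun b => G.Adj a b ∧ G.Adj a b) = G.neighborFinset a := by
        ext b
        simp [SimpleGraph.mem_neighborFinset]
      rw [if_pos (Finset.mem_univ a), this]
      rfl
    exact Finset.sum_congr rfl fun a _ => h2 a
  have hB : ∑ p : V × V, ∑ b, ∑ e, (if b = e then (1:ℕ) else 0) * (hh p b * hh p e)
      = ∑ x, G.degree x ^ 2 := by
    have inner : ∀ (p : V × V) (b : V), ∑ e, (if b = e then (1:ℕ) else 0) * (hh p b * hh p e)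
        = hh p b := by
      intro p b
      simp only [ite_mul, one_mul, zero_mul]
      rw [Finset.sum_ite_eq]
      by_cases h : G.Adj p.1 b ∧ G.Adj p.2 b <;> simp [hhh, h]
    calc ∑ p : V × V, ∑ b, ∑ e, (if b = e then (1:ℕ) else 0) * (hh p b * hh p e)
        = ∑ p : V × V, ∑ b, hh p b :=
          Finset.sum_congr rfl fun p _ => Finset.sum_congr rfl fun b _ => inner p b
      _ = ∑ p : V × V, #(univ.filter fun b => G.Adj p.1 b ∧ G.Adj p.2 b) :=
          Finset.sum_congr rfl fun p _ => (Finset.card_filter _ _).symm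
      _ = ∑ x, G.degree x ^ 2 := hsum1 G
  calc ∑ p : V × V, #(univ.filter fun b => G.Adj p.1 b ∧ G.Adj p.2 b) ^ 2
      = ∑ p : V × V, ∑ b, ∑ e, hh p b * hh p e :=
        Finset.sum_congr rfl fun p _ => step1 p
    _ ≤ ∑ p : V × V, ∑ b, ∑ e,
        ((if (G.Adj p.1 b ∧ G.Adj p.2 b) ∧ (G.Adj p.1 e ∧ G.Adj p.2 e) ∧ p.1 ≠ p.2 ∧ b ≠ e
            then (1:ℕ) else 0)
          + (if p.1 = p.2 then (1:ℕ) else 0) * (hh p b * hh p e)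
          + (if b = e then (1:ℕ) else 0) * (hh p b * hh p e)) := by
        refine Finset.sum_le_sum fun p _ => Finset.sum_le_sum fun b _ =>
          Finset.sum_le_sum fun e _ => point p b e
    _ = (∑ p : V × V, ∑ b, ∑ e,
          (if (G.Adj p.1 b ∧ G.Adj p.2 b) ∧ (G.Adj p.1 e ∧ G.Adj p.2 e) ∧ p.1 ≠ p.2 ∧ b ≠ e
            then (1:ℕ) else 0))
        + (∑ p : V × V, ∑ b, ∑ e, (if p.1 = p.2 then (1:ℕ) else 0) * (hh p b * hh p e))
        + (∑ p : V × V, ∑ b, ∑ e, (if b = e then (1:ℕ) else 0) * (hh p b * hh p e)) := by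
        simp only [Finset.sum_add_distrib]
    _ ≤ injCount (SimpleGraph.cycleGraph 4) G + (∑ x, G.degree x ^ 2) + (∑ x, G.degree x ^ 2) := by
        rw [hGood, hA, hB]
        exact Nat.add_le_add_right (Nat.add_le_add_right hT1 _) _
    _ = 2 * (∑ x, G.degree x ^ 2) + injCount (SimpleGraph.cycleGraph 4) G := by ring

end Aux

open Finset in
private lemma core_real {V : Type*} [Fintype V] (G : SimpleGraph V) (d : ℝ)
    (hd : ∀ x : V, ((vdegree G x : ℕ) : ℝ) ≤ d) (hd0 : 0 ≤ d) :
    (2 * (edgeCount G : ℝ)) ^ 4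
      ≤ 2 * (Fintype.card V : ℝ) ^ 5 * d ^ 2
        + (Fintype.card V : ℝ) ^ 4 * (injCount (SimpleGraph.cycleGraph 4) G : ℝ) := by
  classical
  have hvd : ∀ x : V, vdegree G x = G.degree x := fun x => by
    rw [vdegree, Nat.card_eq_fintype_card, SimpleGraph.card_neighborSet_eq_degree]
  have hedge : ∑ x, G.degree x = 2 * edgeCount G := by
    rw [SimpleGraph.sum_degrees_eq_twice_card_edges, edgeCount, Nat.card_eq_fintype_card,
      SimpleGraph.edgeFinset_card]
  set v : ℝ := (Fintype.card V : ℝ) with hv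
  have hv0 : 0 ≤ v := Nat.cast_nonneg _
  set S : ℝ := ∑ x, (G.degree x : ℝ) ^ 2 with hS
  have hS0 : 0 ≤ S := Finset.sum_nonneg fun x _ => sq_nonneg _
  set I : ℝ := (injCount (SimpleGraph.cycleGraph 4) G : ℝ) with hI
  have hI0 : 0 ≤ I := Nat.cast_nonneg _
  -- step 1 : (2e)² ≤ v * S
  have h1 : (2 * (edgeCount G : ℝ)) ^ 2 ≤ v * S := by
    have := sq_sum_le_card_mul_sum_sq (s := (univ : Finset V))
      (f := fun x => (G.degree x : ℝ))
    rw [Finset.card_univ] at this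
    calc (2 * (edgeCount G : ℝ)) ^ 2 = (∑ x, (G.degree x : ℝ)) ^ 2 := by
          rw [← Nat.cast_sum]; norm_cast; rw [hedge]
      _ ≤ v * S := this
  -- step 2 : S ≤ v * d²
  have h2 : S ≤ v * d ^ 2 := by
    calc S ≤ ∑ _x : V, d ^ 2 := by
          refine Finset.sum_le_sum fun x _ => ?_
          have := hd x
          rw [hvd x] at this
          exact pow_le_pow_left₀ (Nat.cast_nonneg _) this 2
      _ = v * d ^ 2 := by rw [Finset.sum_const, Finset.card_univ, nsmul_eq_mul]
  -- step 3 : S² ≤ v² * (2 * S + I)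
  have h3 : S ^ 2 ≤ v ^ 2 * (2 * S + I) := by
    have hcount := count_main G
    have hs1 := hsum1 G
    have che2 := sq_sum_le_card_mul_sum_sq (s := (univ : Finset (V × V)))
      (f := fun p => (#(univ.filter fun b => G.Adj p.1 b ∧ G.Adj p.2 b) : ℝ))
    rw [Finset.card_univ, Fintype.card_prod] at che2
    have hSalt : S = ∑ p : V × V, (#(univ.filter fun b => G.Adj p.1 b ∧ G.Adj p.2 b) : ℝ) := by
      have hcast : ((∑ x, G.degree x ^ 2 : ℕ) : ℝ) = S := by rw [hS]; push_cast; rfl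
      rw [← hcast, ← hs1]
      push_cast
      rfl
    have hcount' : ∑ p : V × V, (#(univ.filter fun b => G.Adj p.1 b ∧ G.Adj p.2 b) : ℝ) ^ 2
        ≤ 2 * S + I := by
      have := hcount
      calc ∑ p : V × V, (#(univ.filter fun b => G.Adj p.1 b ∧ G.Adj p.2 b) : ℝ) ^ 2
          = ((∑ p : V × V, #(univ.filter fun b => G.Adj p.1 b ∧ G.Adj p.2 b) ^ 2 : ℕ) : ℝ) := by
            push_cast
            rfl
        _ ≤ ((2 * (∑ x, G.degree x ^ 2) + injCount (SimpleGraph.cycleGraph 4) G : ℕ) : ℝ) := by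
            exact_mod_cast hcount
        _ = 2 * S + I := by push_cast; rfl
    calc S ^ 2 = (∑ p : V × V, (#(univ.filter fun b => G.Adj p.1 b ∧ G.Adj p.2 b) : ℝ)) ^ 2 := by
          rw [hSalt]
      _ ≤ (v * v) * ∑ p : V × V, (#(univ.filter fun b => G.Adj p.1 b ∧ G.Adj p.2 b) : ℝ) ^ 2 := by
          have := che2
          push_cast at this ⊢
          nlinarith [this]
      _ ≤ (v * v) * (2 * S + I) := by
          refine mul_le_mul_of_nonneg_left hcount' (by positivity)
      _ = v ^ 2 * (2 * S + I) := by ring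
  -- combine
  have h4 : (2 * (edgeCount G : ℝ)) ^ 4 ≤ v ^ 2 * S ^ 2 := by
    calc (2 * (edgeCount G : ℝ)) ^ 4 = ((2 * (edgeCount G : ℝ)) ^ 2) ^ 2 := by ring
      _ ≤ (v * S) ^ 2 := by
          exact pow_le_pow_left₀ (sq_nonneg _) h1 2
      _ = v ^ 2 * S ^ 2 := by ring
  calc (2 * (edgeCount G : ℝ)) ^ 4 ≤ v ^ 2 * S ^ 2 := h4
    _ ≤ v ^ 2 * (v ^ 2 * (2 * S + I)) := mul_le_mul_of_nonneg_left h3 (by positivity)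
    _ ≤ v ^ 2 * (v ^ 2 * (2 * (v * d ^ 2) + I)) := by
        refine mul_le_mul_of_nonneg_left (mul_le_mul_of_nonneg_left ?_ (by positivity))
          (by positivity)
        linarith
    _ = 2 * v ^ 5 * d ^ 2 + v ^ 4 * I := by ring

private lemma comp4 : numComponents (SimpleGraph.cycleGraph 4) = 1 := by
  have hc : (SimpleGraph.cycleGraph 4).Connected := SimpleGraph.cycleGraph_connected (n := 3)
  rw [numComponents, Nat.card_eq_one_iff_unique]
  exact ⟨hc.preconnected.subsingleton_connectedComponent,
    ⟨(SimpleGraph.cycleGraph 4).connectedComponentMk 0⟩⟩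

private lemma bigcomp4 : numBigComponents (SimpleGraph.cycleGraph 4) = 1 := by
  have hc : (SimpleGraph.cycleGraph 4).Connected := SimpleGraph.cycleGraph_connected (n := 3)
  have hsub := hc.preconnected.subsingleton_connectedComponent
  rw [numBigComponents, Nat.card_eq_one_iff_unique]
  refine ⟨⟨fun a b => Subtype.ext (Subsingleton.elim _ _)⟩, ?_⟩
  refine ⟨⟨(SimpleGraph.cycleGraph 4).connectedComponentMk 0, ?_⟩⟩
  have hsupp : ((SimpleGraph.cycleGraph 4).connectedComponentMk 0).supp = Set.univ := by
    ext w
    simp only [SimpleGraph.ConnectedComponent.mem_supp_iff, Set.mem_univ, iff_true]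
    exact Subsingleton.elim _ _
  rw [hsupp]
  have h4 : Nat.card (Set.univ : Set (Fin 4)) = 4 := by
    rw [Nat.card_congr (Equiv.Set.univ _), Nat.card_eq_fintype_card, Fintype.card_fin]
  omega

/-- If `(Gₙ,dₙ)` is an admissible sequence of large essential girth with
`v(Gₙ) → ∞` and `dₙ = O(v(Gₙ))`, then the edge density `2e(Gₙ)/v(Gₙ)² → 0`. -/
theorem stmt8 (V : ℕ → Type) [∀ n, Fintype (V n)] [∀ n, Nonempty (V n)]
    (G : ∀ n, SimpleGraph (V n)) (d : ℕ → ℝ)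
    (hadm : ∀ n, Admissible (G n) (d n)) (hd : ∀ n, 1 < d n)
    (hgirth : LargeEssentialGirth V G d)
    (hv : Tendsto (fun n => (Nat.card (V n) : ℝ)) atTop atTop)
    (hO : ∃ C : ℝ, ∀ n, d n ≤ C * (Nat.card (V n) : ℝ)) :
    Tendsto (fun n => 2 * (edgeCount (G n) : ℝ) / (Nat.card (V n) : ℝ) ^ 2)
      atTop (𝓝 0) := by
  classical
  obtain ⟨C, hC⟩ := hO
  have hvpos : ∀ n, (1:ℝ) ≤ (Nat.card (V n) : ℝ) := fun n => by
    have : 0 < Nat.card (V n) := Nat.card_pos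
    exact_mod_cast this
  have hC0 : 0 < C := by
    by_contra h
    push_neg at h
    nlinarith [hC 0, hd 0, hvpos 0]
  have key : ∀ n, (2 * (edgeCount (G n) : ℝ) / (Nat.card (V n) : ℝ) ^ 2) ^ 4
      ≤ 2 * C ^ 2 * ((Nat.card (V n) : ℝ))⁻¹
        + C ^ 3 * injDensity (SimpleGraph.cycleGraph 4) (G n) (d n) := by
    intro n
    set v : ℝ := (Nat.card (V n) : ℝ) with hvdef
    set ID : ℝ := injDensity (SimpleGraph.cycleGraph 4) (G n) (d n) with hIDdef
    have hv1 : 1 ≤ v := hvpos n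
    have hv0 : 0 < v := lt_of_lt_of_le one_pos hv1
    have hd1 : 1 < d n := hd n
    have hdn0 : 0 < d n := lt_trans one_pos hd1
    have hcv : d n ≤ C * v := hC n
    set I : ℝ := (injCount (SimpleGraph.cycleGraph 4) (G n) : ℝ) with hI
    have hI0 : 0 ≤ I := Nat.cast_nonneg _
    have hcardV : ((Fintype.card (V n) : ℕ) : ℝ) = v := by
      rw [hvdef, Nat.card_eq_fintype_card]
    have hcore := core_real (G n) (d n) (fun x => (hadm n).2 x) (le_of_lt hdn0)
    rw [hcardV] at hcore
    have hID : ID = I / (v * d n * (d n - 1) ^ 2) := by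
      rw [hIDdef, injDensity, comp4, bigcomp4]
      have h4 : Nat.card (Fin 4) = 4 := by
        rw [Nat.card_eq_fintype_card, Fintype.card_fin]
      rw [h4]
      norm_num
      rw [hcardV]
    have hdm1 : 0 < d n - 1 := by linarith
    have hdenpos : 0 < v * d n * (d n - 1) ^ 2 := by positivity
    have hIeq : I = ID * (v * d n * (d n - 1) ^ 2) := by
      rw [hID]
      field_simp
    have hID0 : 0 ≤ ID := by
      rw [hID]
      positivity
    have hrho : (2 * (edgeCount (G n) : ℝ) / v ^ 2) ^ 4
        = (2 * (edgeCount (G n) : ℝ)) ^ 4 / v ^ 8 := by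
      rw [div_pow]
      ring
    rw [hrho, div_le_iff₀ (by positivity)]
    have hexp : (2 * C ^ 2 * v⁻¹ + C ^ 3 * ID) * v ^ 8
        = 2 * C ^ 2 * v ^ 7 + C ^ 3 * ID * v ^ 8 := by
      field_simp
    rw [hexp]
    have hd2 : d n ^ 2 ≤ C ^ 2 * v ^ 2 := by nlinarith
    have hfac : v * d n * (d n - 1) ^ 2 ≤ C ^ 3 * v ^ 4 := by
      have ha : d n - 1 ≤ C * v := by linarith
      have hb : (d n - 1) ^ 2 ≤ (C * v) ^ 2 := pow_le_pow_left₀ (by linarith) ha 2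
      calc v * d n * (d n - 1) ^ 2
          ≤ v * (C * v) * (d n - 1) ^ 2 := by
            exact mul_le_mul_of_nonneg_right
              (mul_le_mul_of_nonneg_left hcv (le_of_lt hv0)) (sq_nonneg _)
        _ ≤ v * (C * v) * ((C * v) ^ 2) := by
            refine mul_le_mul_of_nonneg_left hb (by positivity)
        _ = C ^ 3 * v ^ 4 := by ring
    have hIle : v ^ 4 * I ≤ C ^ 3 * ID * v ^ 8 := by
      rw [hIeq]
      calc v ^ 4 * (ID * (v * d n * (d n - 1) ^ 2))
          ≤ v ^ 4 * (ID * (C ^ 3 * v ^ 4)) := by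
            exact mul_le_mul_of_nonneg_left
              (mul_le_mul_of_nonneg_left hfac hID0) (by positivity)
        _ = C ^ 3 * ID * v ^ 8 := by ring
    have hfive : 2 * v ^ 5 * d n ^ 2 ≤ 2 * C ^ 2 * v ^ 7 := by nlinarith [pow_pos hv0 5]
    linarith [hcore, hIle, hfive]
  have hg : Tendsto (fun n => 2 * C ^ 2 * ((Nat.card (V n) : ℝ))⁻¹
      + C ^ 3 * injDensity (SimpleGraph.cycleGraph 4) (G n) (d n)) atTop (𝓝 0) := by
    have t1 : Tendsto (fun n => ((Nat.card (V n) : ℝ))⁻¹) atTop (𝓝 0) :=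
      hv.inv_tendsto_atTop
    have t2 := hgirth 4 (by norm_num)
    have := (t1.const_mul (2 * C ^ 2)).add (t2.const_mul (C ^ 3))
    simpa using this
  have h0 : Tendsto (fun n =>
      (2 * (edgeCount (G n) : ℝ) / (Nat.card (V n) : ℝ) ^ 2) ^ 4) atTop (𝓝 0) :=
    squeeze_zero (fun n => by positivity) key hg
  have hnn : ∀ n, 0 ≤ 2 * (edgeCount (G n) : ℝ) / (Nat.card (V n) : ℝ) ^ 2 := fun n => by
    positivity
  have h1 : Tendsto (fun n =>
      Real.sqrt ((2 * (edgeCount (G n) : ℝ) / (Nat.card (V n) : ℝ) ^ 2) ^ 4)) atTop (𝓝 0) := by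
    simpa [Real.sqrt_zero, Function.comp_def] using (Real.continuous_sqrt.tendsto 0).comp h0
  have h2 : Tendsto (fun n =>
      Real.sqrt (Real.sqrt ((2 * (edgeCount (G n) : ℝ) / (Nat.card (V n) : ℝ) ^ 2) ^ 4)))
      atTop (𝓝 0) := by
    simpa [Real.sqrt_zero, Function.comp_def] using (Real.continuous_sqrt.tendsto 0).comp h1
  refine h2.congr fun n => ?_
  rw [show (2 * (edgeCount (G n) : ℝ) / (Nat.card (V n) : ℝ) ^ 2) ^ 4
      = ((2 * (edgeCount (G n) : ℝ) / (Nat.card (V n) : ℝ) ^ 2) ^ 2) ^ 2 by ring,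
    Real.sqrt_sq (sq_nonneg _), Real.sqrt_sq (hnn n)]
end

section
/- Let F be a connected graph with n ≥ 1 vertices. An admissible labeling of F is a bijection φ : V(F) → {0,1,…,n−1} such that for every i with 1 ≤ i ≤ n, the set of vertices with labels less than i spans a connected subgraph of F. Two admissible labelings are adjacent if one is obtained from the other by swapping the labels i−1 and i for some i. Then: (a) the graph whose vertices are the admissible labelings of F, with this adjacency, is connected; and (b) for any fixed vertex o of F, the admissible labelings φ with φ(o) = 0 span a connected subgraph of this graph. -/
/-- An admissible labeling of a graph `F` on `n` vertices: a bijection `φ : V(F) ≃ Fin n`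
such that for every `1 ≤ i ≤ n`, the vertices with labels `< i` span a connected subgraph. -/
def AdmissibleLabeling {V : Type*} [Fintype V] (F : SimpleGraph V)
    (φ : V ≃ Fin (Fintype.card V)) : Prop :=
  ∀ i : ℕ, 1 ≤ i → i ≤ Fintype.card V →
    (F.induce {v : V | (φ v : ℕ) < i}).Connected

/-- Two labelings are related if one is obtained from the other by swapping the
labels `i - 1` and `i` for some `1 ≤ i < n`. -/
def LabelSwapRel {V : Type*} {n : ℕ} (φ ψ : V ≃ Fin n) : Prop :=
  ∃ (i : ℕ) (_ : 1 ≤ i) (h2 : i < n),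
    ψ = φ.trans (Equiv.swap ⟨i - 1, by omega⟩ ⟨i, h2⟩)

/-- The graph whose vertices are the admissible labelings of `F`, two labelings being
adjacent iff they differ by a swap of two consecutive labels. -/
def labelGraph {V : Type*} [Fintype V] (F : SimpleGraph V) :
    SimpleGraph {φ : V ≃ Fin (Fintype.card V) // AdmissibleLabeling F φ} :=
  SimpleGraph.fromRel fun φ ψ => LabelSwapRel φ.1 ψ.1

namespace Stmt17Aux

variable {V : Type*} [Fintype V] {F : SimpleGraph V}

omit [Fintype V]

lemma conn_singleton (v : V) : (F.induce {v}).Connected := by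
  haveI : Nonempty ({v} : Set V) := ⟨⟨v, rfl⟩⟩
  refine SimpleGraph.Connected.mk fun a b => ?_
  have : a = b := Subtype.ext (a.2.trans b.2.symm)
  exact this ▸ SimpleGraph.Reachable.refl _

lemma conn_insert {S : Set V} (hS : (F.induce S).Connected) {u w : V} (hu : u ∈ S)
    (h : F.Adj w u) : (F.induce (insert w S)).Connected := by
  have h2 : (F.induce {w, u}).Connected := SimpleGraph.induce_pair_connected_of_adj h
  have := SimpleGraph.induce_union_connected h2.preconnected hS.preconnected ⟨u, by simp, hu⟩
  have hset : ({w, u} : Set V) ∪ S = insert w S := by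
    ext x; simp only [Set.mem_union, Set.mem_insert_iff, Set.mem_singleton_iff]
    constructor
    · rintro ((rfl | rfl) | hx) <;> simp [hu, *]
    · rintro (rfl | hx) <;> simp [*]
  rwa [hset] at this

lemma exists_adj_of_conn_insert {S : Set V} (hS : S.Nonempty) {w : V} (hw : w ∉ S)
    (hc : (F.induce (insert w S)).Connected) : ∃ u ∈ S, F.Adj w u := by
  obtain ⟨u0, hu0⟩ := hS
  obtain ⟨p⟩ := hc ⟨w, Set.mem_insert _ _⟩ ⟨u0, Set.mem_insert_of_mem _ hu0⟩
  cases p with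
  | nil => exact absurd hu0 (by simpa using hw)
  | @cons _ b _ h q =>
    have hb : (b : V) ∈ S := by
      rcases b.2 with hb | hb
      · have hadj : F.Adj w (b : V) := h
        rw [hb] at hadj
        exact absurd hadj (F.loopless.irrefl w)
      · exact hb
    exact ⟨b, hb, h⟩

lemma swap_prefix_ne {n : ℕ} (φ : V ≃ Fin n) {i : ℕ} (h1 : 1 ≤ i) (h2 : i < n)
    (hi1 : i - 1 < n) {j : ℕ} (hj : j ≠ i) :
    {v : V | ((φ.trans (Equiv.swap ⟨i - 1, hi1⟩ ⟨i, h2⟩)) v : ℕ) < j}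
      = {v : V | (φ v : ℕ) < j} := by
  ext v
  simp only [Set.mem_setOf_eq, Equiv.trans_apply, Equiv.swap_apply_def]
  split_ifs with ha hb
  · have : (φ v : ℕ) = i - 1 := by rw [ha]
    simp only [this]; omega
  · have : (φ v : ℕ) = i := by rw [hb]
    simp only [this]; omega
  · rfl

lemma swap_prefix_eq {n : ℕ} (φ : V ≃ Fin n) {i : ℕ} (h1 : 1 ≤ i) (h2 : i < n)
    (hi1 : i - 1 < n) :
    {v : V | ((φ.trans (Equiv.swap ⟨i - 1, hi1⟩ ⟨i, h2⟩)) v : ℕ) < i}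
      = insert (φ.symm ⟨i, h2⟩) {v : V | (φ v : ℕ) < i - 1} := by
  ext v
  simp only [Set.mem_setOf_eq, Equiv.trans_apply, Equiv.swap_apply_def, Set.mem_insert_iff]
  have hsym : v = φ.symm ⟨i, h2⟩ ↔ φ v = ⟨i, h2⟩ := by
    rw [Equiv.eq_symm_apply]
  rw [hsym]
  split_ifs with ha hb
  · have h' : (φ v : ℕ) = i - 1 := by rw [ha]
    simp only [ha, Fin.ext_iff] at *
    omega
  · simp [hb]; omega
  · have hane : (φ v : ℕ) ≠ i - 1 := fun h => ha (Fin.ext h)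
    have hbne : (φ v : ℕ) ≠ i := fun h => hb (Fin.ext h)
    rw [Fin.ext_iff]
    simp only [Fin.ext_iff] at *
    omega

variable [Fintype V]

lemma adm_of_swap {φ : V ≃ Fin (Fintype.card V)} (hφ : AdmissibleLabeling F φ) {i : ℕ}
    (h1 : 1 ≤ i) (h2 : i < Fintype.card V) (hi1 : i - 1 < Fintype.card V)
    (hc : (F.induce (insert (φ.symm ⟨i, h2⟩) {v : V | (φ v : ℕ) < i - 1})).Connected) :
    AdmissibleLabeling F (φ.trans (Equiv.swap ⟨i - 1, hi1⟩ ⟨i, h2⟩)) := by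
  intro j hj1 hjn
  rcases eq_or_ne j i with rfl | hj
  · rw [swap_prefix_eq φ h1 h2 hi1]; exact hc
  · rw [swap_prefix_ne φ h1 h2 hi1 hj]; exact hφ j hj1 hjn

lemma adj_swap {φ : V ≃ Fin (Fintype.card V)} (hφ : AdmissibleLabeling F φ) {i : ℕ}
    (h1 : 1 ≤ i) (h2 : i < Fintype.card V)
    (hi1 : i - 1 < Fintype.card V)
    {ψ : V ≃ Fin (Fintype.card V)} (hψ : AdmissibleLabeling F ψ)
    (hs : ψ = φ.trans (Equiv.swap ⟨i - 1, hi1⟩ ⟨i, h2⟩)) :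
    (labelGraph F).Adj ⟨φ, hφ⟩ ⟨ψ, hψ⟩ := by
  rw [labelGraph, SimpleGraph.fromRel_adj]
  refine ⟨?_, Or.inl ⟨i, h1, h2, hs⟩⟩
  intro hcontra
  have h' : φ = ψ := congrArg Subtype.val hcontra
  have := congrArg (fun e : V ≃ Fin _ => (e (φ.symm ⟨i, h2⟩) : ℕ)) h'
  simp only [hs, Equiv.trans_apply, Equiv.apply_symm_apply, Equiv.swap_apply_right] at this
  omega

lemma bubble (r : V) (t : ℕ) :
    ∀ (φ : V ≃ Fin (Fintype.card V)) (hφ : AdmissibleLabeling F φ) (hr : (φ r : ℕ) = 0)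
      (w : V) (k : ℕ) (hk : 1 ≤ k) (hm : (φ w : ℕ) = k + t)
      (hH : ∀ j, k ≤ j → j < k + t → (F.induce (insert w {v : V | (φ v : ℕ) < j})).Connected),
    ∃ (ψ : V ≃ Fin (Fintype.card V)) (hψ : AdmissibleLabeling F ψ) (hr' : (ψ r : ℕ) = 0),
      (ψ w : ℕ) = k ∧ (∀ v : V, (φ v : ℕ) < k → ψ v = φ v) ∧
      ((labelGraph F).induce {χ : {φ // AdmissibleLabeling F φ} | (χ.1 r : ℕ) = 0}).Reachable
        ⟨⟨φ, hφ⟩, hr⟩ ⟨⟨ψ, hψ⟩, hr'⟩ := by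
  induction t with
  | zero =>
    intro φ hφ hr w k hk hm hH
    exact ⟨φ, hφ, hr, by omega, fun v _ => rfl, SimpleGraph.Reachable.refl _⟩
  | succ t ih =>
    intro φ hφ hr w k hk hm hH
    have h2 : k + t + 1 < Fintype.card V := by
      have := (φ w).isLt; omega
    have h1 : 1 ≤ k + t + 1 := by omega
    have hlt : k + t + 1 - 1 < Fintype.card V := by omega
    have hφw : φ w = ⟨k + t + 1, h2⟩ := by
      rw [Fin.ext_iff]
      show (φ w : ℕ) = k + t + 1
      omega
    have hwsymm : φ.symm ⟨k + t + 1, h2⟩ = w := by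
      rw [Equiv.symm_apply_eq, hφw]
    set ψ1 := φ.trans (Equiv.swap ⟨k + t + 1 - 1, hlt⟩ ⟨k + t + 1, h2⟩) with hψ1def
    have hc : (F.induce (insert (φ.symm ⟨k + t + 1, h2⟩)
        {v : V | (φ v : ℕ) < k + t + 1 - 1})).Connected := by
      rw [hwsymm]
      exact hH (k + t) (by omega) (by omega)
    have hψ1 : AdmissibleLabeling F ψ1 := adm_of_swap hφ h1 h2 hlt hc
    have hr1 : (ψ1 r : ℕ) = 0 := by
      have h01 : (1 : ℕ) ≠ k + t + 1 := by omega
      have := Set.ext_iff.mp (swap_prefix_ne φ h1 h2 hlt h01) r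
      simp only [Set.mem_setOf_eq] at this
      rw [hψ1def]
      omega
    have hψ1w : (ψ1 w : ℕ) = k + t := by
      rw [hψ1def]
      simp only [Equiv.trans_apply, hφw, Equiv.swap_apply_right]
      omega
    have hH1 : ∀ j, k ≤ j → j < k + t →
        (F.induce (insert w {v : V | (ψ1 v : ℕ) < j})).Connected := by
      intro j hj1 hj2
      have hjne : j ≠ k + t + 1 := by omega
      rw [hψ1def, swap_prefix_ne φ h1 h2 hlt hjne]
      exact hH j hj1 (by omega)
    obtain ⟨ψ, hψ, hr', hψw, hagr, hreach⟩ := ih ψ1 hψ1 hr1 w k hk hψ1w hH1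
    have hagr1 : ∀ v : V, (φ v : ℕ) < k → ψ1 v = φ v := by
      intro v hv
      rw [hψ1def]
      simp only [Equiv.trans_apply]
      refine Equiv.swap_apply_of_ne_of_ne ?_ ?_ <;>
        exact fun hcon => by rw [Fin.ext_iff] at hcon; revert hcon; show ¬ _; simp; omega
    refine ⟨ψ, hψ, hr', hψw, ?_, ?_⟩
    · intro v hv
      rw [hagr v (by rw [hagr1 v hv]; omega), hagr1 v hv]
    · refine SimpleGraph.Reachable.trans ?_ hreach
      refine SimpleGraph.Adj.reachable ?_
      show (labelGraph F).Adj ⟨φ, hφ⟩ ⟨ψ1, hψ1⟩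
      exact adj_swap hφ h1 h2 hlt hψ1 rfl

lemma match_step (r : V) {φ ψ : V ≃ Fin (Fintype.card V)}
    (hφ : AdmissibleLabeling F φ) (hψ : AdmissibleLabeling F ψ)
    (hrφ : (φ r : ℕ) = 0) (hrψ : (ψ r : ℕ) = 0) (k : ℕ) (hkn : k < Fintype.card V)
    (hag : ∀ v : V, (ψ v : ℕ) < k → φ v = ψ v) :
    ∃ (φ' : V ≃ Fin (Fintype.card V)) (hφ' : AdmissibleLabeling F φ')
      (hrφ' : (φ' r : ℕ) = 0),
      (∀ v : V, (ψ v : ℕ) < k + 1 → φ' v = ψ v) ∧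
      ((labelGraph F).induce
        {χ : {φ // AdmissibleLabeling F φ} | (χ.1 r : ℕ) = 0}).Reachable
        ⟨⟨φ, hφ⟩, hrφ⟩ ⟨⟨φ', hφ'⟩, hrφ'⟩ := by
  rcases Nat.eq_zero_or_pos k with rfl | hk
  · refine ⟨φ, hφ, hrφ, ?_, SimpleGraph.Reachable.refl _⟩
    intro v hv
    have hv0 : (ψ v : ℕ) = 0 := by omega
    have hvr : v = r := ψ.injective (Fin.ext (by omega))
    subst hvr
    exact Fin.ext (by omega)
  · set w := ψ.symm ⟨k, hkn⟩ with hwdef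
    have hψw : (ψ w : ℕ) = k := by rw [hwdef]; simp
    have hm : k ≤ (φ w : ℕ) := by
      by_contra hcon
      push_neg at hcon
      set v := ψ.symm ⟨(φ w : ℕ), by omega⟩ with hvdef
      have hψv : (ψ v : ℕ) = (φ w : ℕ) := by rw [hvdef]; simp
      have hφv : φ v = ψ v := hag v (by omega)
      have hvw : v = w := φ.injective (by rw [hφv]; exact Fin.ext (by omega))
      rw [hvw] at hψv
      omega
    have hSconn' : (F.induce (insert w {v : V | (ψ v : ℕ) < k})).Connected := by
      have h' := hψ (k + 1) (by omega) (by omega)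
      have hset : {v : V | (ψ v : ℕ) < k + 1} = insert w {v : V | (ψ v : ℕ) < k} := by
        ext v
        simp only [Set.mem_setOf_eq, Set.mem_insert_iff]
        constructor
        · intro hv
          rcases Nat.lt_succ_iff_lt_or_eq.mp hv with h | h
          · exact Or.inr h
          · exact Or.inl (by rw [hwdef, Equiv.eq_symm_apply]; exact Fin.ext h)
        · rintro (rfl | hv) <;> omega
      rwa [hset] at h'
    obtain ⟨u, hu, hadj⟩ := exists_adj_of_conn_insert
      ⟨r, show (ψ r : ℕ) < k by omega⟩
      (show w ∉ {v : V | (ψ v : ℕ) < k} by simp only [Set.mem_setOf_eq]; omega) hSconn'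
    have hu' : (ψ u : ℕ) < k := hu
    have hφu : (φ u : ℕ) < k := by rw [hag u hu']; exact hu'
    have hHconn : ∀ j, k ≤ j → j < k + ((φ w : ℕ) - k) →
        (F.induce (insert w {v : V | (φ v : ℕ) < j})).Connected := by
      intro j hj1 hj2
      have hjn : j ≤ Fintype.card V := by have := (φ w).isLt; omega
      exact conn_insert (hφ j (by omega) hjn)
        (show (φ u : ℕ) < j by omega) hadj
    obtain ⟨ψ', hψ', hr', hψ'w, hagr, hreach⟩ :=
      bubble r ((φ w : ℕ) - k) φ hφ hrφ w k hk (by omega) hHconn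
    refine ⟨ψ', hψ', hr', ?_, hreach⟩
    intro v hv
    rcases Nat.lt_succ_iff_lt_or_eq.mp hv with h | h
    · have h1 : φ v = ψ v := hag v h
      have h2 : ψ' v = φ v := hagr v (by rw [h1]; exact h)
      rw [h2, h1]
    · have hvw : v = w := by rw [hwdef, Equiv.eq_symm_apply]; exact Fin.ext h
      subst hvw
      exact Fin.ext (by omega)

lemma match_all (r : V) : ∀ (t k : ℕ), Fintype.card V ≤ k + t →
    ∀ (φ ψ : V ≃ Fin (Fintype.card V)) (hφ : AdmissibleLabeling F φ)
      (hψ : AdmissibleLabeling F ψ) (hrφ : (φ r : ℕ) = 0) (hrψ : (ψ r : ℕ) = 0),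
    (∀ v : V, (ψ v : ℕ) < k → φ v = ψ v) →
    ((labelGraph F).induce
      {χ : {φ // AdmissibleLabeling F φ} | (χ.1 r : ℕ) = 0}).Reachable
      ⟨⟨φ, hφ⟩, hrφ⟩ ⟨⟨ψ, hψ⟩, hrψ⟩ := by
  intro t
  induction t with
  | zero =>
    intro k hkt φ ψ hφ hψ hrφ hrψ hag
    have : φ = ψ := Equiv.ext fun v => hag v (by have := (ψ v).isLt; omega)
    subst this
    exact SimpleGraph.Reachable.refl _
  | succ t ih =>
    intro k hkt φ ψ hφ hψ hrφ hrψ hag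
    rcases lt_or_ge k (Fintype.card V) with hkn | hkn
    · obtain ⟨φ', hφ', hrφ', hag', hreach⟩ := match_step r hφ hψ hrφ hrψ k hkn hag
      exact hreach.trans (ih (k + 1) (by omega) φ' ψ hφ' hψ hrφ' hrψ hag')
    · exact ih k (by omega) φ ψ hφ hψ hrφ hrψ hag

lemma exists_adm (hF : F.Connected) (r : V) :
    ∃ (φ : V ≃ Fin (Fintype.card V)), AdmissibleLabeling F φ ∧ (φ r : ℕ) = 0 := by
  classical
  let e0 := Fintype.equivFin V
  let key : V → ℕ ×ₗ Fin (Fintype.card V) := fun v => toLex (F.dist r v, e0 v)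
  have hinj : Function.Injective key := by
    intro a b hab
    have := congrArg (fun p => (ofLex p).2) hab
    exact e0.injective this
  letI : LinearOrder V := LinearOrder.lift' key hinj
  have hlt : ∀ {a b : V}, a < b ↔ key a < key b := Iff.rfl
  have hdist_lt : ∀ {a b : V}, F.dist r a < F.dist r b → a < b := by
    intro a b h
    rw [hlt]
    exact (Prod.Lex.lt_iff).mpr (Or.inl h)
  let φ : V ≃ Fin (Fintype.card V) := (monoEquivOfFin V rfl).symm.toEquiv
  have hφmono : ∀ {a b : V}, φ a < φ b ↔ a < b := by
    intro a b
    exact (monoEquivOfFin V rfl).symm.lt_iff_lt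
  have hrmin : ∀ v : V, v ≠ r → φ r < φ v := by
    intro v hv
    refine hφmono.mpr (hdist_lt ?_)
    rw [SimpleGraph.dist_self]
    exact hF.pos_dist_of_ne (Ne.symm hv)
  have hn : 0 < Fintype.card V := Fintype.card_pos_iff.mpr ⟨r⟩
  have hr0 : (φ r : ℕ) = 0 := by
    by_contra h0
    set v := φ.symm ⟨0, hn⟩ with hvdef
    have hv : (φ v : ℕ) = 0 := by rw [hvdef]; simp
    have hvr : v ≠ r := fun h => by rw [h] at hv; omega
    have := hrmin v hvr
    rw [Fin.lt_iff_val_lt_val] at this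
    omega
  refine ⟨φ, ?_, hr0⟩
  intro i hi1 hin
  set S := {v : V | (φ v : ℕ) < i} with hSdef
  have hrS : r ∈ S := by simp only [hSdef, Set.mem_setOf_eq]; omega
  have main : ∀ d (a : V) (ha : a ∈ S), F.dist r a = d →
      (F.induce S).Reachable ⟨r, hrS⟩ ⟨a, ha⟩ := by
    intro d
    induction d using Nat.strong_induction_on with
    | _ d ih =>
      intro a ha hd
      rcases eq_or_ne a r with rfl | hne
      · exact SimpleGraph.Reachable.refl _
      · have hdpos : 0 < d := by
          rw [← hd]; exact hF.pos_dist_of_ne (Ne.symm hne)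
        obtain ⟨p, hp⟩ := hF.exists_walk_length_eq_dist r a
        have hq : p.reverse.length = d := by
          rw [SimpleGraph.Walk.length_reverse, hp, hd]
        revert hq
        cases hrev : p.reverse with
        | nil => intro _; exact absurd rfl hne
        | @cons _ u _ hadj q' =>
          intro hq
          rw [SimpleGraph.Walk.length_cons] at hq
          have hdu1 : F.dist r u ≤ d - 1 := by
            have := SimpleGraph.dist_le q'.reverse
            rw [SimpleGraph.Walk.length_reverse] at this
            omega
          have hdu : F.dist r u < d := by omega
          have hua : u < a := hdist_lt (by omega)
          have huS : u ∈ S := by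
            have : φ u < φ a := hφmono.mpr hua
            rw [Fin.lt_iff_val_lt_val] at this
            simp only [hSdef, Set.mem_setOf_eq] at ha ⊢
            omega
          have hreach := ih (F.dist r u) hdu u huS rfl
          have hedge : (F.induce S).Adj ⟨u, huS⟩ ⟨a, ha⟩ := hadj.symm
          exact hreach.trans hedge.reachable
  have hne : Nonempty S := ⟨⟨r, hrS⟩⟩
  refine SimpleGraph.Connected.mk fun x y => ?_
  exact (main _ x.1 x.2 rfl).symm.trans (main _ y.1 y.2 rfl)

lemma root_change (hn : 0 < Fintype.card V) {a b : V} (hab : F.Adj a b)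
    (φ : V ≃ Fin (Fintype.card V)) (hφ : AdmissibleLabeling F φ) (hra : (φ a : ℕ) = 0) :
    ∃ (ψ : V ≃ Fin (Fintype.card V)) (hψ : AdmissibleLabeling F ψ), (ψ b : ℕ) = 0 ∧
      (labelGraph F).Reachable ⟨φ, hφ⟩ ⟨ψ, hψ⟩ := by
  have hne : a ≠ b := hab.ne
  have hmb : 1 ≤ (φ b : ℕ) := by
    by_contra h
    push_neg at h
    exact hne (φ.injective (Fin.ext (by omega : (φ a : ℕ) = (φ b : ℕ))))
  have h2 : 1 < Fintype.card V := lt_of_le_of_lt hmb (φ b).isLt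
  have hH : ∀ j, 1 ≤ j → j < 1 + ((φ b : ℕ) - 1) →
      (F.induce (insert b {v : V | (φ v : ℕ) < j})).Connected := by
    intro j hj1 hj2
    exact conn_insert (hφ j hj1 (by have := (φ b).isLt; omega))
      (show (φ a : ℕ) < j by omega) hab.symm
  obtain ⟨ψ', hψ', hra', hψ'b, hagr, hreach⟩ :=
    bubble a ((φ b : ℕ) - 1) φ hφ hra b 1 le_rfl (by omega) hH
  have hreachG : (labelGraph F).Reachable ⟨φ, hφ⟩ ⟨ψ', hψ'⟩ :=
    hreach.map ⟨Subtype.val, fun h => h⟩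
  have hlt0 : 1 - 1 < Fintype.card V := by omega
  set ψ := ψ'.trans (Equiv.swap ⟨1 - 1, hlt0⟩ ⟨1, h2⟩) with hψdef
  have hψ'b1 : ψ' b = ⟨1, h2⟩ := by
    rw [Fin.ext_iff]
    show (ψ' b : ℕ) = 1
    omega
  have hsymm1 : ψ'.symm ⟨1, h2⟩ = b := by rw [Equiv.symm_apply_eq, hψ'b1]
  have hc : (F.induce (insert (ψ'.symm ⟨1, h2⟩)
      {v : V | (ψ' v : ℕ) < 1 - 1})).Connected := by
    rw [hsymm1]
    have hempty : {v : V | (ψ' v : ℕ) < 1 - 1} = ∅ := by ext v; simp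
    rw [hempty]
    have hsing : insert b (∅ : Set V) = {b} := by ext v; simp
    rw [hsing]
    exact conn_singleton b
  have hψadm : AdmissibleLabeling F ψ := adm_of_swap hψ' le_rfl h2 hlt0 hc
  have hψb : (ψ b : ℕ) = 0 := by
    rw [hψdef]
    simp only [Equiv.trans_apply, hψ'b1, Equiv.swap_apply_right]
  exact ⟨ψ, hψadm, hψb, hreachG.trans (SimpleGraph.Adj.reachable
    (adj_swap hψ' le_rfl h2 hlt0 hψadm rfl))⟩

theorem stmt17_aux (F : SimpleGraph V) (hF : F.Connected) (o : V) :
    (labelGraph F).Connected ∧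
    ((labelGraph F).induce
        {φ : {φ : V ≃ Fin (Fintype.card V) // AdmissibleLabeling F φ} |
          (φ.1 o : ℕ) = 0}).Connected := by
  have hn : 0 < Fintype.card V := Fintype.card_pos_iff.mpr ⟨o⟩
  have hwalk_move : ∀ {a : V} (_ : F.Walk a o) (φ : V ≃ Fin (Fintype.card V))
      (hφ : AdmissibleLabeling F φ), (φ a : ℕ) = 0 →
      ∃ (ψ : V ≃ Fin (Fintype.card V)) (hψ : AdmissibleLabeling F ψ),
        (ψ o : ℕ) = 0 ∧ (labelGraph F).Reachable ⟨φ, hφ⟩ ⟨ψ, hψ⟩ := by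
    intro a p
    induction p with
    | nil => exact fun φ hφ hra => ⟨φ, hφ, hra, SimpleGraph.Reachable.refl _⟩
    | cons hadj q ih =>
      intro φ hφ hra
      obtain ⟨ψ1, hψ1, hb, hr1⟩ := root_change hn hadj φ hφ hra
      obtain ⟨ψ, hψ, ho, hr2⟩ := ih ψ1 hψ1 hb
      exact ⟨ψ, hψ, ho, hr1.trans hr2⟩
  obtain ⟨φ0, hφ0, hr0⟩ := exists_adm hF o
  constructor
  · haveI : Nonempty {φ : V ≃ Fin (Fintype.card V) // AdmissibleLabeling F φ} :=
      ⟨⟨φ0, hφ0⟩⟩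
    refine SimpleGraph.Connected.mk fun x y => ?_
    have hx0 : (x.1 (x.1.symm ⟨0, hn⟩) : ℕ) = 0 := by simp
    have hy0 : (y.1 (y.1.symm ⟨0, hn⟩) : ℕ) = 0 := by simp
    obtain ⟨px⟩ := hF (x.1.symm ⟨0, hn⟩) o
    obtain ⟨py⟩ := hF (y.1.symm ⟨0, hn⟩) o
    obtain ⟨ψx, hψx, hox, hrx⟩ := hwalk_move px x.1 x.2 hx0
    obtain ⟨ψy, hψy, hoy, hry⟩ := hwalk_move py y.1 y.2 hy0
    have hmid := (match_all o (Fintype.card V) 0 (by omega) ψx ψy hψx hψy hox hoy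
      (fun v hv => absurd hv (by omega))).map
      (⟨Subtype.val, fun h => h⟩ :
        (labelGraph F).induce {χ : {φ // AdmissibleLabeling F φ} | (χ.1 o : ℕ) = 0}
          →g labelGraph F)
    exact (hrx.trans hmid).trans hry.symm
  · haveI : Nonempty {χ : {φ : V ≃ Fin (Fintype.card V) // AdmissibleLabeling F φ} |
        (χ.1 o : ℕ) = 0} := ⟨⟨⟨φ0, hφ0⟩, hr0⟩⟩
    refine SimpleGraph.Connected.mk fun x y => ?_
    exact match_all o (Fintype.card V) 0 (by omega) x.1.1 y.1.1 x.1.2 y.1.2 x.2 y.2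
      (fun v hv => absurd hv (by omega))

end Stmt17Aux

open Stmt17Aux in
/-- For a connected graph `F`: (a) the graph of admissible labelings of
`F` is connected; (b) for any fixed vertex `o`, the admissible labelings `φ` with
`φ(o) = 0` span a connected subgraph. -/
theorem stmt17 {V : Type*} [Fintype V] (F : SimpleGraph V) (hF : F.Connected) (o : V) :
    (labelGraph F).Connected ∧
    ((labelGraph F).induce
        {φ : {φ : V ≃ Fin (Fintype.card V) // AdmissibleLabeling F φ} |
          (φ.1 o : ℕ) = 0}).Connected := by
  exact stmt17_aux F hF o
end

section
/- For any family 𝒢 of admissible pairs (G,d) and any ε > 0, there exists a number N such that for every (G,d) ∈ 𝒢 there exists (G',d') ∈ 𝒢 with v(G') ≤ N and d' ≤ N, such that |t(F,G,d) − t(F,G',d')| < ε for every graph F with v(F) ≤ 1/ε. -/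
open Filter Topology

open SimpleGraph

lemma homCount_le_nat {m n D : ℕ} (F : SimpleGraph (Fin m)) (G : SimpleGraph (Fin n))
    (hD : ∀ x, vdegree G x ≤ D) :
    homCount F G ≤ n ^ numComponents F * D ^ (m - numComponents F) := by
  classical
  set r : F.ConnectedComponent → Fin m := Quot.out with hrdef
  have hr : ∀ c, F.connectedComponentMk (r c) = c := fun c => Quot.out_eq c
  have hι : ∀ x : Fin n, ∃ ι : G.neighborSet x → Fin D, Function.Injective ι := by
    intro x
    have hc : Fintype.card (G.neighborSet x) ≤ Fintype.card (Fin D) := by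
      have := hD x
      rw [vdegree, Nat.card_eq_fintype_card] at this
      simpa using this
    obtain ⟨e⟩ := Function.Embedding.nonempty_of_card_le hc
    exact ⟨e, e.injective⟩
  choose ι hιinj using hι
  have hpar : ∀ v : Fin m, v ≠ r (F.connectedComponentMk v) →
      ∃ w, F.Adj v w ∧
        F.dist w (r (F.connectedComponentMk w)) < F.dist v (r (F.connectedComponentMk v)) := by
    intro v hv
    have hre : F.Reachable v (r (F.connectedComponentMk v)) :=
      ConnectedComponent.exact (by rw [hr])
    have hdist : F.dist v (r (F.connectedComponentMk v)) ≠ 0 := by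
      rw [SimpleGraph.dist_ne_zero_iff_ne_and_reachable]
      exact ⟨hv, hre⟩
    obtain ⟨p, hp⟩ := SimpleGraph.exists_walk_of_dist_ne_zero hdist
    obtain ⟨w, h, q, rfl⟩ := SimpleGraph.Walk.exists_eq_cons_of_ne hv p
    · refine ⟨w, h, ?_⟩
      have hcw : F.connectedComponentMk w = F.connectedComponentMk v :=
        (ConnectedComponent.connectedComponentMk_eq_of_adj h).symm
      rw [hcw]
      have hle : F.dist w (r (F.connectedComponentMk v)) ≤ q.length := SimpleGraph.dist_le q
      simp only [SimpleGraph.Walk.length_cons] at hp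
      omega
  choose par hpadj hplt using hpar
  let Ψ : (F →g G) → (F.ConnectedComponent → Fin n) ×
      ({v : Fin m // v ≠ r (F.connectedComponentMk v)} → Fin D) :=
    fun f => (fun c => f (r c),
      fun v => ι (f (par v.1 v.2)) ⟨f v.1, (f.map_adj (hpadj v.1 v.2)).symm⟩)
  have helper : ∀ (x y : Fin n) (_ : x = y) (a : G.neighborSet x) (b : G.neighborSet y),
      ι x a = ι y b → (a : Fin n) = (b : Fin n) := by
    intro x y hxy; subst hxy; intro a b h
    exact congrArg Subtype.val (hιinj x h)
  have hΨ : Function.Injective Ψ := by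
    intro f g hfg
    have h1 : ∀ c, f (r c) = g (r c) := fun c => congrFun (congrArg Prod.fst hfg) c
    have h2 := congrArg Prod.snd hfg
    have key : ∀ k v, F.dist v (r (F.connectedComponentMk v)) = k → f v = g v := by
      intro k
      induction k using Nat.strong_induction_on with
      | _ k ih =>
        intro v hk
        by_cases hv : v = r (F.connectedComponentMk v)
        · rw [hv]; exact h1 _
        · have hp := hplt v hv
          have hfp : f (par v hv) = g (par v hv) := ih _ (hk ▸ hp) _ rfl
          have hev := congrFun h2 ⟨v, hv⟩
          exact helper _ _ hfp _ _ hev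
    exact DFunLike.ext f g (fun v => key _ v rfl)
  have hcard := Nat.card_le_card_of_injective Ψ hΨ
  have hsub : Nat.card {v : Fin m // v ≠ r (F.connectedComponentMk v)} = m - numComponents F := by
    have h1 : Nat.card {v : Fin m // v = r (F.connectedComponentMk v)} = numComponents F := by
      apply Nat.card_eq_of_bijective (fun v => F.connectedComponentMk v.1)
      constructor
      · rintro ⟨v, hv⟩ ⟨w, hw⟩ h
        simp only at h
        apply Subtype.ext
        show v = w
        rw [hv, hw, h]
      · intro c
        exact ⟨⟨r c, by rw [hr]⟩, hr c⟩
    rw [Nat.card_eq_fintype_card] at h1 ⊢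
    calc Fintype.card {v : Fin m // v ≠ r (F.connectedComponentMk v)}
        = Fintype.card (Fin m) -
            Fintype.card {v : Fin m // v = r (F.connectedComponentMk v)} :=
          Fintype.card_subtype_compl _
      _ = m - numComponents F := by rw [Fintype.card_fin, h1]
  rw [Nat.card_prod, Nat.card_fun, Nat.card_fun, hsub] at hcard
  simpa [homCount, numComponents, Nat.card_eq_fintype_card] using hcard

lemma homDensity_mem {m n : ℕ} (F : SimpleGraph (Fin m)) (G : SimpleGraph (Fin n)) (d : ℝ)
    (hn : 1 ≤ n) (hd : Admissible G d) :
    0 ≤ homDensity F G d ∧ homDensity F G d ≤ 1 := by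
  obtain ⟨hd1, hdeg⟩ := hd
  have hd0 : (0:ℝ) < d := lt_of_lt_of_le one_pos hd1
  have hn0 : (0:ℝ) < (n:ℝ) := by exact_mod_cast hn
  have hEq : homDensity F G d = (homCount F G : ℝ) /
      ((n:ℝ) ^ numComponents F * d ^ (m - numComponents F)) := by
    simp [homDensity, Nat.card_eq_fintype_card]
  have hden : (0:ℝ) < (n:ℝ) ^ numComponents F * d ^ (m - numComponents F) := by positivity
  constructor
  · rw [hEq]; exact div_nonneg (Nat.cast_nonneg _) hden.le
  · rw [hEq, div_le_one hden]
    have hb := homCount_le_nat F G (D := ⌊d⌋₊) (fun x => Nat.le_floor (hdeg x))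
    have hb' : (homCount F G : ℝ) ≤ (n:ℝ) ^ numComponents F * (⌊d⌋₊ : ℝ) ^ (m - numComponents F) := by
      exact_mod_cast hb
    refine hb'.trans ?_
    exact mul_le_mul_of_nonneg_left
      (pow_le_pow_left₀ (by positivity) (Nat.floor_le hd0.le) _) (by positivity)

/-- For any family `𝒢` of admissible pairs (given by a membership
predicate `P`) and any `ε > 0`, there is `N` such that every `(G,d) ∈ 𝒢` is `ε`-close, in
all homomorphism densities of graphs on at most `1/ε` vertices, to some `(G',d') ∈ 𝒢` with
`v(G') ≤ N` and `d' ≤ N`. -/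
theorem stmt19 (P : (n : ℕ) → SimpleGraph (Fin n) → ℝ → Prop)
    (hP : ∀ n G d, P n G d → 1 ≤ n ∧ Admissible G d)
    (ε : ℝ) (hε : 0 < ε) :
    ∃ N : ℕ, ∀ (n : ℕ) (G : SimpleGraph (Fin n)) (d : ℝ), P n G d →
      ∃ (n' : ℕ) (G' : SimpleGraph (Fin n')) (d' : ℝ), P n' G' d' ∧
        n' ≤ N ∧ d' ≤ (N : ℝ) ∧
        ∀ (m : ℕ) (F : SimpleGraph (Fin m)), (m : ℝ) ≤ 1 / ε →
          |homDensity F G d - homDensity F G' d'| < ε := by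
  classical
  set M := ⌊1/ε⌋₊ with hM
  let I := (k : Fin (M+1)) × SimpleGraph (Fin k.1)
  let code : (n : ℕ) → SimpleGraph (Fin n) → ℝ → I → Fin (M+1) :=
    fun n G d i => ⟨min M ⌊homDensity i.2 G d / ε⌋₊, by omega⟩
  let S : Set (I → Fin (M+1)) := {c | ∃ n G d, P n G d ∧ code n G d = c}
  haveI : Finite I := inferInstance
  have hwit : ∀ c : S, ∃ n : ℕ, ∃ G : SimpleGraph (Fin n), ∃ d : ℝ, P n G d ∧ code n G d = c.1 :=
    fun c => c.2
  choose w1 w2 w3 hw4 hw5 using hwit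
  haveI := Fintype.ofFinite ↥S
  let N := Finset.univ.sup (fun c : ↥S => max (w1 c) ⌈w3 c⌉₊)
  refine ⟨N, ?_⟩
  intro n G d hPn
  have hcS : code n G d ∈ S := ⟨n, G, d, hPn, rfl⟩
  set c : ↥S := ⟨code n G d, hcS⟩ with hcdef
  refine ⟨w1 c, w2 c, w3 c, hw4 c, ?_, ?_, ?_⟩
  · exact le_trans (le_max_left _ _)
      (Finset.le_sup (f := fun c : ↥S => max (w1 c) ⌈w3 c⌉₊) (Finset.mem_univ c))
  · have h1 : ⌈w3 c⌉₊ ≤ N := le_trans (le_max_right _ _)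
      (Finset.le_sup (f := fun c : ↥S => max (w1 c) ⌈w3 c⌉₊) (Finset.mem_univ c))
    exact le_trans (Nat.le_ceil _) (by exact_mod_cast h1)
  · intro m F hm
    have hmM : m ≤ M := Nat.le_floor (by exact_mod_cast hm)
    have hi := congrFun (hw5 c) ⟨⟨m, by omega⟩, F⟩
    have hi' : min M ⌊homDensity F (w2 c) (w3 c) / ε⌋₊ = min M ⌊homDensity F G d / ε⌋₊ :=
      congrArg Fin.val hi
    obtain ⟨hPn1, hPn2⟩ := hP n G d hPn
    obtain ⟨hQ1, hQ2⟩ := hP _ _ _ (hw4 c)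
    obtain ⟨ht0, ht1⟩ := homDensity_mem F G d hPn1 hPn2
    obtain ⟨hs0, hs1⟩ := homDensity_mem F (w2 c) (w3 c) hQ1 hQ2
    set t := homDensity F G d with htdef
    set s := homDensity F (w2 c) (w3 c) with hsdef
    have hft : ⌊t/ε⌋₊ ≤ M := by
      rw [hM]
      exact Nat.floor_le_floor ((div_le_div_iff_of_pos_right hε).mpr ht1)
    have hfs : ⌊s/ε⌋₊ ≤ M := by
      rw [hM]
      exact Nat.floor_le_floor ((div_le_div_iff_of_pos_right hε).mpr hs1)
    rw [min_eq_right hfs, min_eq_right hft] at hi'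
    have h1 : (⌊t/ε⌋₊ : ℝ) ≤ t/ε := Nat.floor_le (div_nonneg ht0 hε.le)
    have h2 : t/ε < ⌊t/ε⌋₊ + 1 := Nat.lt_floor_add_one _
    have h3 : (⌊s/ε⌋₊ : ℝ) ≤ s/ε := Nat.floor_le (div_nonneg hs0 hε.le)
    have h4 : s/ε < ⌊s/ε⌋₊ + 1 := Nat.lt_floor_add_one _
    have hcast : ((⌊s/ε⌋₊ : ℕ) : ℝ) = ((⌊t/ε⌋₊ : ℕ) : ℝ) := by exact_mod_cast hi'
    rw [abs_sub_lt_iff]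
    have e1 : t < (⌊t/ε⌋₊ + 1) * ε := by
      rw [← div_lt_iff₀ hε] at *
      linarith [h2]
    have e2 : (⌊t/ε⌋₊ : ℝ) * ε ≤ t := by
      rw [← le_div_iff₀ hε]
      exact h1
    have e3 : s < (⌊s/ε⌋₊ + 1) * ε := by
      rw [← div_lt_iff₀ hε] at *
      linarith [h4]
    have e4 : (⌊s/ε⌋₊ : ℝ) * ε ≤ s := by
      rw [← le_div_iff₀ hε]
      exact h3
    constructor <;> nlinarith [hcast]
end
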